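/- arXiv:2004.05321 — 2 statements merged into one kernel-verified Lean document; each statement's English description precedes it below -/
import Mathlib

section
/- Let Y be a separable, non-compact metric space, let X be a Y-z-Tychonoff metrizable compact space, and let H be a subspace of Y^X (with the topology of pointwise convergence) containing B_1^{st}(X,Y). Then H is a normal space if and only if X is countable, and in that case H = Y^X. -/
open Set Filter Topology TopologicalSpace

universe u v

/-- An ideal of compact sets in a topological space `X`. -/
structure IsCompactIdeal (X : Type u) [TopologicalSpace X] (I : Set (Set X)) : Prop where
  isCompact : ∀ A ∈ I, IsCompact A
  sUnion_eq : ⋃₀ I = Set.univ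
  union_mem : ∀ A ∈ I, ∀ B ∈ I, A ∪ B ∈ I
  inter_compact_mem : ∀ A ∈ I, ∀ K : Set X, IsCompact K → A ∩ K ∈ I

/-- `γ` is an `I`-cover of `X`. -/
def IsIdealCover {X : Type u} (I : Set (Set X)) (γ : Set (Set X)) : Prop :=
  ∀ A ∈ I, ∃ U ∈ γ, A ⊆ U

/-- `C` is an `I`-sequence in `X`. -/
def IsIdealSeq {X : Type u} (I : Set (Set X)) (C : ℕ → Set X) : Prop :=
  ∀ A ∈ I, ∃ m : ℕ, ∀ n ≥ m, A ⊆ C n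

/-- The property `γ_I`: every open `I`-cover contains an `I`-sequence. -/
def GammaIdeal (X : Type u) [TopologicalSpace X] (I : Set (Set X)) : Prop :=
  ∀ γ : Set (Set X), (∀ U ∈ γ, IsOpen U) → IsIdealCover I γ →
    ∃ C : ℕ → Set X, (∀ n, C n ∈ γ) ∧ IsIdealSeq I C

/-- `γ` is an ω-cover of `X`: every finite set is contained in a member. -/
def IsOmegaCover {X : Type u} (γ : Set (Set X)) : Prop :=
  ∀ F : Set X, F.Finite → ∃ U ∈ γ, F ⊆ U

/-- The property `γ`: every open ω-cover contains a sequence in which every point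
eventually lies. -/
def GammaP (X : Type u) [TopologicalSpace X] : Prop :=
  ∀ γ : Set (Set X), (∀ U ∈ γ, IsOpen U) → IsOmegaCover γ →
    ∃ C : ℕ → Set X, (∀ n, C n ∈ γ) ∧ ∀ x : X, ∃ m : ℕ, ∀ n ≥ m, x ∈ C n

/-- The property `φ`. -/
def PhiP (X : Type u) [TopologicalSpace X] : Prop :=
  ∀ η : ℕ → Set (Set X),
    (∀ n, ∀ U ∈ η n, IsOpen U) →
    (∀ n, ∀ U ∈ η n, ∃ V ∈ η (n + 1), U ⊆ V) →
    IsOmegaCover (⋃ n, η n) →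
    ∃ C : ℕ → Set X, (∀ x : X, ∃ m : ℕ, ∀ n ≥ m, x ∈ C n) ∧
      ∀ n, ∀ F : Set X, F.Finite → F ⊆ C n → ∃ U ∈ η n, F ⊆ U

/-- The property `φ_I`. -/
def PhiIdeal (X : Type u) [TopologicalSpace X] (I : Set (Set X)) : Prop :=
  ∀ η : ℕ → Set (Set X),
    (∀ n, ∀ U ∈ η n, IsOpen U) →
    (∀ n, ∀ U ∈ η n, ∃ V ∈ η (n + 1), U ⊆ V) →
    IsIdealCover I (⋃ n, η n) →
    ∃ C : ℕ → Set X, IsIdealSeq I C ∧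
      ∀ n, ∀ A ∈ I, A ⊆ C n → ∃ U ∈ η n, A ⊆ U

/-- The `I`-open topology on `Y^X`, generated by the sets `[K;U] = {f | f(K) ⊆ U}`
for `K ∈ I` and `U ⊆ Y` open. -/
def idealOpenTopology {X : Type u} [TopologicalSpace X] (I : Set (Set X))
    (Y : Type v) [TopologicalSpace Y] : TopologicalSpace (X → Y) :=
  TopologicalSpace.generateFrom
    {S : Set (X → Y) | ∃ K ∈ I, ∃ U : Set Y, IsOpen U ∧ S = {f : X → Y | Set.MapsTo f K U}}

/-- Type synonym for `X → Y` carrying the `I`-open topology. -/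
def IdealFn (X : Type u) (Y : Type v) [TopologicalSpace X] [TopologicalSpace Y]
    (I : Set (Set X)) : Type (max u v) := X → Y

instance IdealFn.instTopologicalSpace {X : Type u} {Y : Type v} [TopologicalSpace X]
    [TopologicalSpace Y] (I : Set (Set X)) : TopologicalSpace (IdealFn X Y I) :=
  idealOpenTopology I Y

/-- `X` is `Y_I`-Tychonoff. -/
def IdealYTychonoff (X : Type u) (Y : Type v) [TopologicalSpace X] [TopologicalSpace Y]
    (I : Set (Set X)) : Prop :=
  ∀ A : Set X, IsClosed A → ∀ y₀ : Y, ∀ F ∈ I, F ⊆ Aᶜ →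
    ∀ f : F → Y, Continuous f → (Set.range f).Finite →
      ∃ g : X → Y, Continuous g ∧ (∀ x : F, g x.1 = f x) ∧ g '' A ⊆ {y₀}

/-- `X` is `Y`-Tychonoff (the case of the ideal of finite sets, with arbitrary
functions on finite sets). -/
def YTychonoff (X : Type u) (Y : Type v) [TopologicalSpace X] [TopologicalSpace Y] : Prop :=
  ∀ A : Set X, IsClosed A → ∀ y₀ : Y, ∀ F : Set X, F.Finite → F ⊆ Aᶜ →
    ∀ f : F → Y, ∃ g : X → Y, Continuous g ∧ (∀ x : F, g x.1 = f x) ∧ g '' A ⊆ {y₀}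

/-- `H` is a relatively `D_I`-Tychonoff subspace of `S ⊆ Y^X`. -/
def RelTychonoffSub {X : Type u} {Y : Type v} [TopologicalSpace X]
    (I : Set (Set X)) (D : Set Y) (H S : Set (X → Y)) : Prop :=
  ∀ A : Set X, IsClosed A → ∀ F ∈ I, F ⊆ Aᶜ → ∀ y₀ ∈ D, ∀ f ∈ S,
    (f '' F).Finite → f '' F ⊆ D →
      ∃ g ∈ H, Set.EqOn g f F ∧ g '' A ⊆ {y₀}

/-- `Z` is a k-space: for every non-closed `A ⊆ Z` there is a compact `K` such that
`A ∩ K` is not closed in `K`. -/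
def IsKSpace (Z : Type u) [TopologicalSpace Z] : Prop :=
  ∀ A : Set Z, ¬ IsClosed A → ∃ K : Set Z, IsCompact K ∧
    ¬ IsClosed (Subtype.val ⁻¹' A : Set K)

/-- `Z` has countable tightness. -/
def HasCountableTightness (Z : Type u) [TopologicalSpace Z] : Prop :=
  ∀ (A : Set Z) (z : Z), z ∈ closure A → ∃ B ⊆ A, B.Countable ∧ z ∈ closure B

/-- `⋃_n ⋂_{i ≥ n} U i`, the set of points eventually in all `U i`. -/
def seqLimInf {X : Type u} (U : ℕ → Set X) : Set X :=
  ⋃ n, ⋂ i, ⋂ (_ : n ≤ i), U i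

/-- A zero-set in `X`. -/
def IsZeroSet {X : Type u} [TopologicalSpace X] (F : Set X) : Prop :=
  ∃ f : X → ℝ, Continuous f ∧ F = f ⁻¹' {0}

/-- The Baire topology on `X`, with the zero-sets as a base. -/
def baireTopology (X : Type u) [TopologicalSpace X] : TopologicalSpace X :=
  TopologicalSpace.generateFrom {F : Set X | IsZeroSet F}

/-- `X` is `Y`-z-Tychonoff. -/
def YzTychonoff (X : Type u) (Y : Type v) [TopologicalSpace X] [TopologicalSpace Y] : Prop :=
  (T1Space X ∧ CompletelyRegularSpace X) ∧
  ∀ A : Set X, IsClosed A → ∀ n : ℕ, ∀ F : Fin n → Set X,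
    (∀ i, IsZeroSet (F i)) → (∀ i j, i ≠ j → Disjoint (F i) (F j)) →
    (⋃ i, F i) ⊆ Aᶜ → ∀ y₀ : Y, ∀ y : Fin n → Y,
      ∃ f : X → Y, Continuous f ∧ f '' A ⊆ {y₀} ∧ ∀ i, f '' (F i) ⊆ {y i}

/-- `X` is `Y`-normal. -/
def YNormal (X : Type u) (Y : Type v) [TopologicalSpace X] [TopologicalSpace Y] : Prop :=
  T1Space X ∧
  ∀ F : Set X, IsClosed F → ∀ f : F → Y, Continuous f → (Set.range f).Finite →
    ∃ g : X → Y, Continuous g ∧ ∀ x : F, g x.1 = f x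

/-- `X` is `Y`-z-normal. -/
def YzNormal (X : Type u) (Y : Type v) [TopologicalSpace X] [TopologicalSpace Y] : Prop :=
  (T1Space X ∧ CompletelyRegularSpace X) ∧
  ∀ F : Set X, IsZeroSet F → ∀ f : F → Y, Continuous f → (Set.range f).Finite →
    ∃ g : X → Y, Continuous g ∧ ∀ x : F, g x.1 = f x

/-- `f n` stably converges to `g`. -/
def StablyConvergesTo {X : Type u} {Y : Type v} (f : ℕ → X → Y) (g : X → Y) : Prop :=
  ∀ x : X, {n : ℕ | f n x ≠ g x}.Finite

/-- The stable Baire class one functions `B₁ˢᵗ(X,Y)`. -/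
def BaireOneStable (X : Type u) (Y : Type v) [TopologicalSpace X] [TopologicalSpace Y] :
    Set (X → Y) :=
  {g | ∃ f : ℕ → X → Y, (∀ n, Continuous (f n)) ∧ StablyConvergesTo f g}

/-- The Baire class one functions `B₁(X,Y)`, pointwise limits of sequences of
continuous functions. -/
def BaireOne (X : Type u) (Y : Type v) [TopologicalSpace X] [TopologicalSpace Y] :
    Set (X → Y) :=
  {g | ∃ f : ℕ → X → Y, (∀ n, Continuous (f n)) ∧
    ∀ x : X, Filter.Tendsto (fun n => f n x) Filter.atTop (nhds (g x))}

/-- The Baire functions `B(X,Y) = ⋃_{α<ω₁} B_α(X,Y)`: the smallest family containing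
the continuous functions and closed under pointwise limits of sequences. -/
inductive IsBaireFun (X : Type u) (Y : Type v) [TopologicalSpace X] [TopologicalSpace Y] :
    (X → Y) → Prop
  | cont (f : X → Y) : Continuous f → IsBaireFun X Y f
  | limit (f : ℕ → X → Y) (g : X → Y) : (∀ n, IsBaireFun X Y (f n)) →
      (∀ x : X, Filter.Tendsto (fun n => f n x) Filter.atTop (nhds (g x))) →
      IsBaireFun X Y g

/-- `Z` is scattered: every nonempty subset has an isolated point. -/
def IsScatteredSpace (Z : Type u) [TopologicalSpace Z] : Prop :=
  ∀ S : Set Z, S.Nonempty → ∃ x ∈ S, ∃ U : Set Z, IsOpen U ∧ U ∩ S = {x}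

/-- The subspace `K` of `X` is scattered. -/
def IsScatteredSubset {X : Type u} [TopologicalSpace X] (K : Set X) : Prop :=
  ∀ S : Set X, S ⊆ K → S.Nonempty → ∃ x ∈ S, ∃ U : Set X, IsOpen U ∧ U ∩ S = {x}

/-- The tightness `t(Z)`: the least infinite cardinal `κ` such that whenever
`z ∈ closure A` there is `B ⊆ A` with `#B ≤ κ` and `z ∈ closure B`. -/
noncomputable def tightnessCard (Z : Type u) [TopologicalSpace Z] : Cardinal.{u} :=
  sInf {κ : Cardinal.{u} | Cardinal.aleph0 ≤ κ ∧ ∀ (A : Set Z) (z : Z), z ∈ closure A →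
    ∃ B : Set Z, B ⊆ A ∧ Cardinal.mk B ≤ κ ∧ z ∈ closure B}

/-- The `I`-Lindelöf degree of `X`: the least infinite cardinal `κ` such that every
open `I`-cover has an `I`-subcover of cardinality `≤ κ`. -/
noncomputable def idealLindelofDeg (X : Type u) [TopologicalSpace X] (I : Set (Set X)) :
    Cardinal.{u} :=
  sInf {κ : Cardinal.{u} | Cardinal.aleph0 ≤ κ ∧ ∀ γ : Set (Set X), (∀ U ∈ γ, IsOpen U) →
    IsIdealCover I γ → ∃ γ' : Set (Set X), γ' ⊆ γ ∧ Cardinal.mk γ' ≤ κ ∧ IsIdealCover I γ'}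

lemma auxFinsetMin {ι : Type*} (s : Finset ι) (f : ι → ℝ) (h : ∀ i ∈ s, 0 < f i) :
    ∃ ε : ℝ, 0 < ε ∧ ∀ i ∈ s, ε ≤ f i := by
  classical
  induction s using Finset.induction_on with
  | empty => exact ⟨1, one_pos, by simp⟩
  | insert _ _ hx ih =>
    rename_i a t
    obtain ⟨ε, hε, hle⟩ := ih (fun i hi => h i (Finset.mem_insert_of_mem hi))
    refine ⟨min ε (f a), lt_min hε (h a (Finset.mem_insert_self a t)), ?_⟩
    intro i hi
    rcases Finset.mem_insert.mp hi with rfl | hi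
    · exact min_le_right _ _
    · exact le_trans (min_le_left _ _) (hle i hi)

lemma auxZero {X : Type*} [MetricSpace X] {s : Set X} (hs : IsClosed s) : IsZeroSet s := by
  rcases s.eq_empty_or_nonempty with rfl | hne
  · exact ⟨fun _ => 1, continuous_const, by simp⟩
  · refine ⟨fun p => Metric.infDist p s, Metric.continuous_infDist_pt s, ?_⟩
    ext p
    simp only [Set.mem_preimage, Set.mem_singleton_iff]
    exact hs.mem_iff_infDist_zero hne

lemma auxBoolNe : ∀ a b : Bool, a ≠ b → a = !b := by decide

open Classical in
noncomputable def caDelta (x z : ℕ → Bool) : ℕ :=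
  if h : x = z then 0 else Nat.find (Function.ne_iff.mp h)

lemma caDelta_ne {x z : ℕ → Bool} (h : x ≠ z) :
    x (caDelta x z) ≠ z (caDelta x z) := by
  classical
  rw [caDelta]
  rw [dif_neg h]
  exact Nat.find_spec (Function.ne_iff.mp h)

lemma caDelta_lt {x z : ℕ → Bool} (h : x ≠ z) {i : ℕ} (hi : i < caDelta x z) :
    x i = z i := by
  classical
  rw [caDelta] at hi
  rw [dif_neg h] at hi
  have := Nat.find_min (Function.ne_iff.mp h) hi
  simpa using this

lemma caDelta_eq {x z : ℕ → Bool} (h : x ≠ z) {n : ℕ}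
    (hlt : ∀ i < n, x i = z i) (hne : x n ≠ z n) : caDelta x z = n := by
  rcases lt_trichotomy (caDelta x z) n with hc | hc | hc
  · exact absurd (hlt _ hc) (caDelta_ne h)
  · exact hc
  · exact absurd (caDelta_lt h hc) hne

lemma caDelta_gt {x z : ℕ → Bool} (h : x ≠ z) {k : ℕ}
    (hag : ∀ i ≤ k, x i = z i) : k < caDelta x z := by
  by_contra hle
  push_neg at hle
  exact caDelta_ne h (hag _ hle)

lemma auxEscape {Y : Type*} [MetricSpace Y] (h : ¬ CompactSpace Y) :
    ∃ y : ℕ → Y, Function.Injective y ∧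
      ∀ p : Y, ∃ ε > 0, {n | y n ∈ Metric.ball p ε}.Finite := by
  rw [compactSpace_iff_seqCompactSpace, seqCompactSpace_iff] at h
  unfold IsSeqCompact at h
  push_neg at h
  obtain ⟨u, -, hu⟩ := h
  have hacc : ∀ p : Y, ∃ ε > 0, {n | u n ∈ Metric.ball p ε}.Finite := by
    intro p
    by_contra hcon
    push_neg at hcon
    have hinf : ∀ ε : ℝ, 0 < ε → {n | u n ∈ Metric.ball p ε}.Infinite := by
      intro ε hε
      rcases Set.finite_or_infinite {n | u n ∈ Metric.ball p ε} with hf | hi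
      · exact absurd hf (hcon ε hε)
      · exact hi
    -- build a subsequence converging to p
    have hstep : ∀ k n : ℕ, ∃ m, n < m ∧ u m ∈ Metric.ball p (1/(k+1)) := by
      intro k n
      obtain ⟨m, hm1, hm2⟩ := (hinf (1/(k+1)) (by positivity)).exists_gt n
      exact ⟨m, hm2, hm1⟩
    choose F hF1 hF2 using hstep
    let φ : ℕ → ℕ := fun k => Nat.rec (F 0 0) (fun k ih => F (k+1) ih) k
    have hφmono : StrictMono φ := strictMono_nat_of_lt_succ (fun n => hF1 _ _)
    have hφball : ∀ k : ℕ, u (φ k) ∈ Metric.ball p (1/((k:ℝ)+1)) := by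
      intro k
      cases k with
      | zero => exact hF2 0 0
      | succ k => exact hF2 (k+1) _
    have : Tendsto (u ∘ φ) atTop (nhds p) := by
      rw [Metric.tendsto_atTop]
      intro ε hε
      obtain ⟨N, hN⟩ := exists_nat_one_div_lt hε
      refine ⟨N, fun n hn => ?_⟩
      have h1 := hφball n
      rw [Metric.mem_ball] at h1
      have h2 : (1:ℝ)/(n+1) ≤ 1/(N+1) := by
        apply one_div_le_one_div_of_le (by positivity)
        exact_mod_cast Nat.succ_le_succ hn
      calc dist ((u ∘ φ) n) p = dist (u (φ n)) p := rfl
        _ < 1/(n+1) := h1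
        _ ≤ 1/(N+1) := h2
        _ < ε := hN
    exact hu p (Set.mem_univ p) φ hφmono this
  -- range u is infinite
  have hfib : ∀ c : Y, {n | u n = c}.Finite := by
    intro c
    obtain ⟨ε, hε, hfin⟩ := hacc c
    exact hfin.subset (fun n hn => by simp [Set.mem_setOf_eq] at hn ⊢; simp [hn, Metric.mem_ball, hε])
  have hrinf : (Set.range u).Infinite := by
    intro hfin
    have : (Set.univ : Set ℕ).Finite := by
      have : (Set.univ : Set ℕ) ⊆ ⋃ c ∈ Set.range u, {n | u n = c} := by
        intro n _
        exact Set.mem_biUnion (Set.mem_range_self n) rfl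
      exact ((hfin.biUnion (fun c _ => hfib c)).subset this)
    exact Set.infinite_univ this
  let emb := hrinf.natEmbedding
  refine ⟨fun n => (emb n : Y), ?_, ?_⟩
  · intro a b hab
    exact emb.injective (Subtype.ext hab)
  · intro p
    obtain ⟨ε, hε, hfin⟩ := hacc p
    refine ⟨ε, hε, ?_⟩
    have hVfin : (Set.range u ∩ Metric.ball p ε).Finite := by
      have hsub : Set.range u ∩ Metric.ball p ε ⊆ u '' {m | u m ∈ Metric.ball p ε} := by
        rintro v ⟨⟨m, rfl⟩, hv⟩
        exact ⟨m, hv, rfl⟩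
      exact (hfin.image u).subset hsub
    have hsub2 : {n | (emb n : Y) ∈ Metric.ball p ε} ⊆
        (fun n => (emb n : Y)) ⁻¹' (Set.range u ∩ Metric.ball p ε) :=
      fun n hn => ⟨(emb n).2, hn⟩
    exact (Set.Finite.preimage (fun a _ b _ hab => emb.injective (Subtype.ext hab)) hVfin).subset hsub2

lemma auxIso {Y : Type*} [MetricSpace Y] {y : ℕ → Y} (hyinj : Function.Injective y)
    (hyfin : ∀ p : Y, ∃ ε > 0, {n | y n ∈ Metric.ball p ε}.Finite) :
    ∀ k, ∃ ε > 0, ∀ j, y j ∈ Metric.ball (y k) ε → j = k := by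
  intro k
  obtain ⟨ε₀, hε₀, hfin⟩ := hyfin (y k)
  obtain ⟨ε₁, hε₁, hle⟩ := auxFinsetMin (hfin.toFinset.erase k)
    (fun j => dist (y j) (y k)) (by
      intro j hj
      rw [Finset.mem_erase] at hj
      exact dist_pos.mpr (fun hc => hj.1 (hyinj hc)))
  refine ⟨min ε₀ ε₁, lt_min hε₀ hε₁, ?_⟩
  intro j hj
  rw [Metric.mem_ball] at hj
  by_contra hne
  have hjmem : j ∈ hfin.toFinset.erase k := by
    rw [Finset.mem_erase]
    refine ⟨hne, ?_⟩
    rw [Set.Finite.mem_toFinset]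
    exact Metric.mem_ball.mpr (lt_of_lt_of_le hj (min_le_left _ _))
  have := hle j hjmem
  have h2 : dist (y j) (y k) < ε₁ := lt_of_lt_of_le hj (min_le_right _ _)
  linarith

lemma auxOut {Y : Type*} [MetricSpace Y] {y : ℕ → Y}
    (hyfin : ∀ p : Y, ∃ ε > 0, {n | y n ∈ Metric.ball p ε}.Finite) :
    ∀ p : Y, p ∉ Set.range y → ∃ ε > 0, ∀ j, y j ∉ Metric.ball p ε := by
  intro p hp
  obtain ⟨ε₀, hε₀, hfin⟩ := hyfin p
  obtain ⟨ε₁, hε₁, hle⟩ := auxFinsetMin hfin.toFinset (fun j => dist (y j) p) (by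
    intro j hj
    exact dist_pos.mpr (fun hc => hp ⟨j, hc⟩))
  refine ⟨min ε₀ ε₁, lt_min hε₀ hε₁, ?_⟩
  intro j hj
  rw [Metric.mem_ball] at hj
  have hjmem : j ∈ hfin.toFinset := by
    rw [Set.Finite.mem_toFinset]
    exact Metric.mem_ball.mpr (lt_of_lt_of_le hj (min_le_left _ _))
  have := hle j hjmem
  have h2 : dist (y j) p < ε₁ := lt_of_lt_of_le hj (min_le_right _ _)
  linarith

open Classical in
noncomputable def caF {X : Type u} {Y : Type v} (ψ : (ℕ → Bool) → X) (y : ℕ → Y)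
    (x : ℕ → Bool) : X → Y :=
  Function.extend ψ (fun w => if w = x then y 0 else y (caDelta x w + 1)) (fun _ => y 0)

open Classical in
lemma caF_apply {X : Type u} {Y : Type v} {ψ : (ℕ → Bool) → X} (hψi : Function.Injective ψ)
    (y : ℕ → Y) (x w : ℕ → Bool) :
    caF ψ y x (ψ w) = if w = x then y 0 else y (caDelta x w + 1) :=
  hψi.extend_apply _ _ _

lemma caF_apply' {X : Type u} {Y : Type v} {ψ : (ℕ → Bool) → X} (y : ℕ → Y) (x : ℕ → Bool)
    {p : X} (hp : p ∉ Set.range ψ) : caF ψ y x p = y 0 :=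
  Function.extend_apply' _ _ _ (fun ⟨a, ha⟩ => hp ⟨a, ha⟩)

/-- The cone sets `S x j` of branches deviating from `x` exactly at `j`. -/
def caS (x : ℕ → Bool) (j : ℕ) : Set (ℕ → Bool) := {w | w ≠ x ∧ caDelta x w = j}

lemma caS_iff (x : ℕ → Bool) (j : ℕ) (w : ℕ → Bool) :
    w ∈ caS x j ↔ (∀ i < j, w i = x i) ∧ w j ≠ x j := by
  constructor
  · rintro ⟨hne, rfl⟩
    exact ⟨fun i hi => (caDelta_lt (Ne.symm hne) hi).symm,
      fun hc => caDelta_ne (Ne.symm hne) hc.symm⟩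
  · rintro ⟨hlt, hne⟩
    have hwx : w ≠ x := fun hc => hne (by rw [hc])
    exact ⟨hwx, caDelta_eq (Ne.symm hwx) (fun i hi => (hlt i hi).symm) (fun hc => hne hc.symm)⟩

lemma caS_closed (x : ℕ → Bool) (j : ℕ) : IsClosed (caS x j) := by
  have : caS x j = (⋂ i, {w : ℕ → Bool | i < j → w i = x i}) ∩ {w : ℕ → Bool | w j ≠ x j} := by
    ext w
    simp only [caS_iff, Set.mem_inter_iff, Set.mem_iInter, Set.mem_setOf_eq]
  rw [this]
  apply IsClosed.inter
  · apply isClosed_iInter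
    intro i
    by_cases hi : i < j
    · have : {w : ℕ → Bool | i < j → w i = x i} = (fun w : ℕ → Bool => w i) ⁻¹' {x i} := by
        ext w; simp [hi]
      rw [this]
      exact (isClosed_discrete _).preimage (continuous_apply i)
    · have : {w : ℕ → Bool | i < j → w i = x i} = Set.univ := by
        ext w; simp [hi]
      rw [this]; exact isClosed_univ
  · have : {w : ℕ → Bool | w j ≠ x j} = (fun w : ℕ → Bool => w j) ⁻¹' ({x j}ᶜ) := rfl
    rw [this]
    exact (isClosed_discrete _).preimage (continuous_apply j)

lemma caS_nonempty (x : ℕ → Bool) (j : ℕ) : (caS x j).Nonempty := by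
  refine ⟨Function.update x j (!(x j)), (caS_iff x j _).mpr ⟨?_, ?_⟩⟩
  · intro i hi
    exact Function.update_of_ne (Nat.ne_of_lt hi) _ _
  · rw [Function.update_self]
    simp

lemma caS_subsingleton_inter {x : ℕ → Bool} {i j : ℕ} (hij : i ≠ j) :
    Disjoint (caS x i) (caS x j) := by
  rw [Set.disjoint_left]
  rintro w ⟨-, rfl⟩ ⟨-, hj⟩
  exact hij hj

/-- Membership of the functions `caF` in the stable Baire class one. -/
lemma auxFtilMem {X : Type u} {Y : Type v} [MetricSpace X] [MetricSpace Y]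
    (hXT : YzTychonoff X Y) {ψ : (ℕ → Bool) → X} (hψc : Continuous ψ)
    (hψi : Function.Injective ψ) (y : ℕ → Y) (x : ℕ → Bool) :
    caF ψ y x ∈ BaireOneStable X Y := by
  classical
  set L : ℕ → Set X := fun j => ψ '' caS x j with hL
  have hLcl : ∀ j, IsClosed (L j) :=
    fun j => (((caS_closed x j).isCompact).image hψc).isClosed
  have hLne : ∀ j, (L j).Nonempty := fun j => (caS_nonempty x j).image ψ
  have hLx : ∀ j, ψ x ∉ L j := by
    rintro j ⟨w, hw, hweq⟩
    exact hw.1 (hψi hweq)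
  have hCco : IsCompact (Set.range ψ) := isCompact_range hψc
  have hCne : (Set.range ψ).Nonempty := ⟨ψ x, x, rfl⟩
  have hstep : ∀ n : ℕ, ∃ g : X → Y, Continuous g ∧
      (∀ j < n, ∀ p ∈ L j, g p = y (j+1)) ∧ g (ψ x) = y 0 ∧
      ∃ δ : ℝ, 0 < δ ∧ δ ≤ 1/((n:ℝ)+1) ∧
        ∀ p : X, (∀ j < n, δ ≤ Metric.infDist p (L j)) → g p = y 0 := by
    intro n
    obtain ⟨δ₀, hδ₀, hδle⟩ := auxFinsetMin (Finset.range n)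
      (fun j => Metric.infDist (ψ x) (L j)) (by
        intro j hj
        exact ((hLcl j).notMem_iff_infDist_pos (hLne j)).mp (hLx j))
    set δ : ℝ := min δ₀ (1/((n:ℝ)+1)) with hδdef
    have hδpos : 0 < δ := lt_min hδ₀ (by positivity)
    set A : Set X := {p | ∀ j < n, δ ≤ Metric.infDist p (L j)} with hA
    have hAcl : IsClosed A := by
      have : A = ⋂ j, {p : X | j < n → δ ≤ Metric.infDist p (L j)} := by
        ext p; simp [hA]
      rw [this]
      apply isClosed_iInter
      intro j
      by_cases hj : j < n
      · have : {p : X | j < n → δ ≤ Metric.infDist p (L j)} =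
            (fun p => Metric.infDist p (L j)) ⁻¹' (Set.Ici δ) := by
          ext p; simp [hj]
        rw [this]
        exact isClosed_Ici.preimage (Metric.continuous_infDist_pt _)
      · have : {p : X | j < n → δ ≤ Metric.infDist p (L j)} = Set.univ := by
          ext p; simp [hj]
        rw [this]; exact isClosed_univ
    obtain ⟨f, hfc, hfA, hfL⟩ := hXT.2 A hAcl n (fun j : Fin n => L j)
      (fun j => auxZero (hLcl j))
      (fun i j hij => by
        have : (i : ℕ) ≠ (j : ℕ) := fun hc => hij (Fin.ext hc)
        exact Set.disjoint_image_of_injective hψi (caS_subsingleton_inter this))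
      (by
        rintro p ⟨_, ⟨j, rfl⟩, hp⟩
        intro hpA
        have h0 : Metric.infDist p (L j) = 0 := Metric.infDist_zero_of_mem hp
        have := hpA (j : ℕ) j.2
        rw [h0] at this
        exact absurd this (not_le.mpr hδpos))
      (y 0) (fun j => y ((j : ℕ) + 1))
    refine ⟨f, hfc, ?_, ?_, δ, hδpos, min_le_right _ _, ?_⟩
    · intro j hj p hp
      have := hfL ⟨j, hj⟩ (Set.mem_image_of_mem f hp)
      simpa using this
    · have hmem : ψ x ∈ A := by
        intro j hj
        exact le_trans (le_trans (min_le_left _ _) (hδle j (Finset.mem_range.mpr hj)))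
          (by norm_num)
      have := hfA (Set.mem_image_of_mem f hmem)
      simpa using this
    · intro p hp
      have := hfA (Set.mem_image_of_mem f hp)
      simpa using this
  choose g hgc hgL hgx hgδ using hstep
  refine ⟨g, hgc, ?_⟩
  intro p
  have key : ∃ N, ∀ n ≥ N, g n p = caF ψ y x p := by
    by_cases hp : p ∈ Set.range ψ
    · obtain ⟨w, rfl⟩ := hp
      by_cases hwx : w = x
      · subst hwx
        refine ⟨0, fun n _ => ?_⟩
        rw [hgx n, caF_apply hψi, if_pos rfl]
      · refine ⟨caDelta x w + 1, fun n hn => ?_⟩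
        have hmem : ψ w ∈ L (caDelta x w) :=
          Set.mem_image_of_mem ψ ⟨hwx, rfl⟩
        rw [hgL n (caDelta x w) (by omega) (ψ w) hmem, caF_apply hψi, if_neg hwx]
    · have hpos : 0 < Metric.infDist p (Set.range ψ) :=
        ((hCco.isClosed).notMem_iff_infDist_pos hCne).mp hp
      obtain ⟨N, hN⟩ := exists_nat_one_div_lt hpos
      refine ⟨N, fun n hn => ?_⟩
      obtain ⟨δ, hδpos, hδle, hδp⟩ := hgδ n
      rw [hδp p ?_, caF_apply' y x hp]
      intro j hj
      have hsub : L j ⊆ Set.range ψ := by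
        rintro q ⟨w, -, rfl⟩; exact ⟨w, rfl⟩
      have h1 : Metric.infDist p (Set.range ψ) ≤ Metric.infDist p (L j) :=
        Metric.infDist_le_infDist_of_subset hsub (hLne j)
      have h2 : (1:ℝ)/(n+1) ≤ 1/(N+1) := by
        apply one_div_le_one_div_of_le (by positivity)
        exact_mod_cast Nat.succ_le_succ hn
      calc δ ≤ 1/((n:ℝ)+1) := hδle
        _ ≤ 1/(N+1) := h2
        _ ≤ Metric.infDist p (Set.range ψ) := le_of_lt hN
        _ ≤ Metric.infDist p (L j) := h1
  obtain ⟨N, hNeq⟩ := key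
  apply (Set.finite_Iio N).subset
  intro n hn
  simp only [Set.mem_setOf_eq] at hn
  by_contra hcon
  simp only [Set.mem_Iio, not_lt] at hcon
  exact hn (hNeq n hcon)

lemma caF_range {X : Type u} {Y : Type v} {ψ : (ℕ → Bool) → X} (hψi : Function.Injective ψ)
    (y : ℕ → Y) (x : ℕ → Bool) (p : X) : caF ψ y x p ∈ Set.range y := by
  classical
  by_cases hp : p ∈ Set.range ψ
  · obtain ⟨w, rfl⟩ := hp
    rw [caF_apply hψi]
    by_cases hc : w = x
    · rw [if_pos hc]; exact ⟨0, rfl⟩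
    · rw [if_neg hc]; exact ⟨_, rfl⟩
  · rw [caF_apply' y x hp]; exact ⟨0, rfl⟩

/-- Discreteness: every `G` has a basic neighborhood catching at most one `caF ψ y x`. -/
lemma auxDiscrete {X : Type u} {Y : Type v} [TopologicalSpace X] [MetricSpace Y]
    {ψ : (ℕ → Bool) → X} (hψi : Function.Injective ψ) {y : ℕ → Y}
    (hyiso : ∀ k, ∃ ε > 0, ∀ j, y j ∈ Metric.ball (y k) ε → j = k)
    (hyout : ∀ p : Y, p ∉ Set.range y → ∃ ε > 0, ∀ j, y j ∉ Metric.ball p ε)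
    (G : X → Y) :
    ∃ W : Set (X → Y), IsOpen W ∧ G ∈ W ∧ {x : ℕ → Bool | caF ψ y x ∈ W}.Subsingleton := by
  classical
  choose εf hεfpos hεfiso using hyiso
  by_cases h0 : ∃ z : ℕ → Bool, G (ψ z) = y 0
  · obtain ⟨z₀, hz₀⟩ := h0
    refine ⟨(fun f : X → Y => f (ψ z₀)) ⁻¹' Metric.ball (y 0) (εf 0),
      (Metric.isOpen_ball).preimage (continuous_apply (ψ z₀)), ?_, ?_⟩
    · simp only [Set.mem_preimage, hz₀]
      exact Metric.mem_ball_self (hεfpos 0)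
    · have hz : ∀ x : ℕ → Bool,
          caF ψ y x ∈ (fun f : X → Y => f (ψ z₀)) ⁻¹' Metric.ball (y 0) (εf 0) → x = z₀ := by
        intro x hx
        simp only [Set.mem_preimage] at hx
        rw [caF_apply hψi] at hx
        by_cases hc : z₀ = x
        · exact hc.symm
        · rw [if_neg hc] at hx
          exact absurd (hεfiso 0 _ hx) (Nat.succ_ne_zero _)
      intro a ha b hb
      rw [hz a ha, hz b hb]
  · push_neg at h0
    by_cases h1 : ∃ z : ℕ → Bool, G (ψ z) ∉ Set.range y
    · obtain ⟨z₁, hz₁⟩ := h1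
      obtain ⟨ε, hε, hout⟩ := hyout _ hz₁
      refine ⟨(fun f : X → Y => f (ψ z₁)) ⁻¹' Metric.ball (G (ψ z₁)) ε,
        (Metric.isOpen_ball).preimage (continuous_apply (ψ z₁)), ?_, ?_⟩
      · simp only [Set.mem_preimage]
        exact Metric.mem_ball_self hε
      · intro a ha
        exfalso
        simp only [Set.mem_setOf_eq, Set.mem_preimage] at ha
        obtain ⟨k, hk⟩ := caF_range hψi y a (ψ z₁)
        rw [← hk] at ha
        exact hout k ha
    · push_neg at h1
      choose κfun hκfun using h1
      have hκ0 : ∀ z, κfun z ≠ 0 := by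
        intro z hc
        exact h0 z (by rw [← hκfun z, hc])
      let zs : ℕ → (ℕ → Bool) := fun j => Nat.rec (fun _ => false)
        (fun _ zj => Function.update zj (κfun zj - 1) (!(zj (κfun zj - 1)))) j
      let m : ℕ → ℕ := fun j => κfun (zs j) - 1
      have hzs_succ : ∀ j, zs (j+1) = Function.update (zs j) (m j) (!(zs j (m j))) :=
        fun j => rfl
      let xstar : ℕ → Bool := fun i => if h : ∃ j, i < m j then zs (Nat.find h) i else false
      let mstar : ℕ := κfun xstar - 1
      let N : ℕ := mstar + 1
      refine ⟨(⋂ j ∈ Finset.range (N+1),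
          (fun f : X → Y => f (ψ (zs j))) ⁻¹' Metric.ball (y (κfun (zs j))) (εf (κfun (zs j)))) ∩
          ((fun f : X → Y => f (ψ xstar)) ⁻¹' Metric.ball (y (κfun xstar)) (εf (κfun xstar))),
        ?_, ?_, ?_⟩
      · apply IsOpen.inter
        · exact isOpen_biInter_finset (fun j _ =>
            (Metric.isOpen_ball).preimage (continuous_apply (ψ (zs j))))
        · exact (Metric.isOpen_ball).preimage (continuous_apply (ψ xstar))
      · constructor
        · apply Set.mem_biInter
          intro j _
          simp only [Set.mem_preimage, hκfun]
          exact Metric.mem_ball_self (hεfpos _)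
        · simp only [Set.mem_preimage, hκfun]
          exact Metric.mem_ball_self (hεfpos _)
      · intro a ha b hb
        exfalso
        clear hb b
        obtain ⟨ha1, ha2⟩ := ha
        have hcons : ∀ w : ℕ → Bool,
            caF ψ y a (ψ w) ∈ Metric.ball (y (κfun w)) (εf (κfun w)) →
            a ≠ w ∧ caDelta a w = κfun w - 1 := by
          intro w hw
          rw [caF_apply hψi] at hw
          by_cases hc : w = a
          · rw [if_pos hc] at hw
            exact absurd (hεfiso _ _ hw).symm (hκ0 w)
          · rw [if_neg hc] at hw
            have hd := hεfiso _ _ hw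
            exact ⟨Ne.symm hc, by omega⟩
        have hA : ∀ j ≤ N, a ≠ zs j ∧ caDelta a (zs j) = m j := by
          intro j hj
          exact hcons (zs j) (Set.mem_iInter₂.mp ha1 j (Finset.mem_range.mpr (by omega)))
        have hB : a ≠ xstar ∧ caDelta a xstar = mstar := hcons xstar ha2
        have hmono : ∀ j, j < N → m j < m (j+1) := by
          intro j hj
          have h1 := hA j (by omega)
          have h2 := hA (j+1) (by omega)
          have hag : ∀ i ≤ m j, a i = zs (j+1) i := by
            intro i hi
            rcases lt_or_eq_of_le hi with hi' | hi'
            · rw [hzs_succ, Function.update_of_ne (by omega)]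
              exact caDelta_lt h1.1 (by rw [h1.2]; exact hi')
            · rw [hi', hzs_succ, Function.update_self]
              have hne : a (m j) ≠ zs j (m j) := by
                have := caDelta_ne h1.1
                rwa [h1.2] at this
              exact auxBoolNe _ _ hne
          have := caDelta_gt h2.1 hag
          rwa [h2.2] at this
        have hge : ∀ j, j ≤ N → j ≤ m j := by
          intro j
          induction j with
          | zero => exact fun _ => Nat.zero_le _
          | succ j ih =>
            intro hj
            have := hmono j (by omega)
            have := ih (by omega)
            omega
        have hagree : ∀ i, i < m N → a i = xstar i := by
          intro i hi
          have hex : ∃ j, i < m j := ⟨N, hi⟩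
          have hfind : xstar i = zs (Nat.find hex) i := dif_pos hex
          have hfle : Nat.find hex ≤ N := Nat.find_min' hex hi
          have h3 := hA (Nat.find hex) hfle
          rw [hfind]
          exact caDelta_lt h3.1 (by rw [h3.2]; exact Nat.find_spec hex)
        have h5 : mstar < m N := by
          have := hge N le_rfl
          omega
        have h7 : a mstar ≠ xstar mstar := by
          have := caDelta_ne hB.1
          rwa [hB.2] at this
        exact h7 (hagree mstar h5)

lemma auxContMem {X : Type u} {Y : Type v} [TopologicalSpace X] [TopologicalSpace Y]
    {f : X → Y} (hf : Continuous f) : f ∈ BaireOneStable X Y := by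
  refine ⟨fun _ => f, fun _ => hf, fun x => ?_⟩
  convert Set.finite_empty
  simp

/-- A countable pointwise-dense set of continuous functions. -/
lemma auxDense {X : Type u} {Y : Type v} [MetricSpace X] [MetricSpace Y]
    [SeparableSpace X] [SeparableSpace Y] [Nonempty X] [Nonempty Y]
    (hXT : YzTychonoff X Y) :
    ∃ T : Set (X → Y), T.Countable ∧ (∀ f ∈ T, Continuous f) ∧ Dense T := by
  classical
  set p : ℕ → X := denseSeq X with hp
  have hpd : DenseRange p := denseRange_denseSeq X
  set q : ℕ → Y := denseSeq Y with hq
  have hqd : DenseRange q := denseRange_denseSeq Y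
  set cb : ℕ × ℕ × ℕ → Set X := fun c => Metric.closedBall (p c.1) (1/((c.2.1:ℝ)+1)) with hcb
  have hT : ∀ c : Σ k : ℕ, Fin k → ℕ × ℕ × ℕ, ∃ f : X → Y, Continuous f ∧
      ((∀ i j : Fin c.1, i ≠ j → Disjoint (cb (c.2 i)) (cb (c.2 j))) →
        ∀ i : Fin c.1, ∀ pt ∈ cb (c.2 i), f pt = q ((c.2 i).2.2)) := by
    rintro ⟨k, c⟩
    by_cases hd : ∀ i j : Fin k, i ≠ j → Disjoint (cb (c i)) (cb (c j))
    · obtain ⟨f, hfc, -, hfF⟩ := hXT.2 ∅ isClosed_empty k (fun i => cb (c i))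
        (fun i => auxZero Metric.isClosed_closedBall) hd
        (by rw [Set.compl_empty]; exact Set.subset_univ _)
        (q 0) (fun i => q ((c i).2.2))
      refine ⟨f, hfc, fun _ i pt hpt => ?_⟩
      have := hfF i (Set.mem_image_of_mem f hpt)
      simpa using this
    · exact ⟨fun _ => q 0, continuous_const, fun h => absurd h hd⟩
  choose t ht1 ht2 using hT
  refine ⟨Set.range t, Set.countable_range t, ?_, ?_⟩
  · rintro f ⟨c, rfl⟩
    exact ht1 c
  · rw [dense_iff_inter_open]
    intro W hW hWne
    obtain ⟨g, hg⟩ := hWne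
    obtain ⟨I, u, hu, hsub⟩ := isOpen_pi_iff.mp hW g hg
    -- a uniform gap for the points of I
    obtain ⟨ρ, hρ, hρle⟩ := auxFinsetMin I.offDiag (fun pr => dist pr.1 pr.2) (by
      intro pr hpr
      rw [Finset.mem_offDiag] at hpr
      exact dist_pos.mpr hpr.2.2)
    set r : ℝ := ρ/3 with hr
    have hrpos : 0 < r := by positivity
    have hpt : ∀ a ∈ I, ∃ c : ℕ × ℕ × ℕ, a ∈ cb c ∧ cb c ⊆ Metric.ball a r ∧
        q c.2.2 ∈ u a := by
      intro a ha
      obtain ⟨μ, hμ⟩ := exists_nat_one_div_lt (half_pos hrpos)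
      have : (Metric.ball a (1/((μ:ℝ)+1))).Nonempty := ⟨a, Metric.mem_ball_self (by positivity)⟩
      obtain ⟨n, hn⟩ := hpd.exists_dist_lt a (show (0:ℝ) < 1/((μ:ℝ)+1) by positivity)
      obtain ⟨b, hb⟩ := hqd.exists_mem_open (hu a ha).1 ⟨g a, (hu a ha).2⟩
      refine ⟨(n, μ, b), ?_, ?_, hb⟩
      · rw [hcb]
        simp only [Metric.mem_closedBall]
        exact le_of_lt hn
      · intro z hz
        rw [hcb] at hz
        simp only [Metric.mem_closedBall] at hz
        rw [Metric.mem_ball]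
        calc dist z a ≤ dist z (p n) + dist (p n) a := dist_triangle _ _ _
          _ ≤ 1/((μ:ℝ)+1) + 1/((μ:ℝ)+1) := by
              apply add_le_add hz
              rw [dist_comm]
              exact le_of_lt hn
          _ < r/2 + r/2 := by apply add_lt_add hμ hμ
          _ = r := by ring
    choose! cc hc1 hc2 hc3 using hpt
    set e := I.equivFin with he
    have hdisj : ∀ i j : Fin I.card, i ≠ j →
        Disjoint (cb (cc ((e.symm i : X)))) (cb (cc ((e.symm j : X)))) := by
      intro i j hij
      have hne : (e.symm i : X) ≠ (e.symm j : X) := by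
        intro hc
        exact hij (by
          have h9 : e.symm i = e.symm j := Subtype.ext hc
          have := e.symm.injective h9
          exact this)
      have hmemI : (e.symm i : X) ∈ I := (e.symm i).2
      have hmemJ : (e.symm j : X) ∈ I := (e.symm j).2
      have hdist : 3*r ≤ dist (e.symm i : X) (e.symm j : X) := by
        have h8 : ((e.symm i : X), (e.symm j : X)) ∈ I.offDiag :=
          Finset.mem_offDiag.mpr ⟨hmemI, hmemJ, hne⟩
        have := hρle _ h8
        rw [hr]
        linarith
      rw [Set.disjoint_left]
      intro z hzi hzj
      have h1 : z ∈ Metric.ball (e.symm i : X) r := hc2 _ hmemI hzi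
      have h2 : z ∈ Metric.ball (e.symm j : X) r := hc2 _ hmemJ hzj
      rw [Metric.mem_ball] at h1 h2
      have : dist (e.symm i : X) (e.symm j : X) < 2*r := by
        calc dist (e.symm i : X) (e.symm j : X) ≤ dist (e.symm i : X) z + dist z (e.symm j : X) :=
          dist_triangle _ _ _
        _ < r + r := by
            rw [dist_comm (e.symm i : X) z]
            exact add_lt_add h1 h2
        _ = 2*r := by ring
      linarith
    refine ⟨t ⟨I.card, fun i => cc (e.symm i : X)⟩, ?_, ⟨_, rfl⟩⟩
    apply hsub
    intro a ha
    have h5 := ht2 ⟨I.card, fun i => cc (e.symm i : X)⟩ hdisj (e ⟨a, ha⟩) a (by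
      show a ∈ cb (cc ((e.symm (e ⟨a, ha⟩) : X)))
      rw [Equiv.symm_apply_apply]
      exact hc1 a ha)
    have h6 : ((e.symm (e ⟨a, ha⟩)) : X) = a := by rw [Equiv.symm_apply_apply]
    rw [show (⟨I.card, fun i => cc (e.symm i : X)⟩ : Σ k : ℕ, Fin k → ℕ × ℕ × ℕ).snd (e ⟨a, ha⟩)
        = cc a from by rw [show ((⟨I.card, fun i => cc (e.symm i : X)⟩ : Σ k : ℕ, Fin k → ℕ × ℕ × ℕ).snd (e ⟨a, ha⟩)) = cc ((e.symm (e ⟨a, ha⟩)) : X) from rfl, h6]] at h5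
    rw [h5]
    exact hc3 a ha

lemma auxJones {Z : Type*} [TopologicalSpace Z] [T1Space Z] (hnorm : NormalSpace Z)
    {S : Set Z} (hSc : S.Countable) (hSd : Dense S)
    {F : (ℕ → Bool) → Z} (hFinj : Function.Injective F)
    (hdisc : ∀ z : Z, ∃ U : Set Z, IsOpen U ∧ z ∈ U ∧ {x : ℕ → Bool | F x ∈ U}.Subsingleton) :
    False := by
  classical
  have hcl : ∀ s : Set (ℕ → Bool), IsClosed (F '' s) := by
    intro s
    rw [← isOpen_compl_iff, isOpen_iff_forall_mem_open]
    intro z hz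
    obtain ⟨U, hU, hzU, hsub⟩ := hdisc z
    by_cases hex : ∃ x ∈ s, F x ∈ U
    · obtain ⟨x₀, hx₀s, hx₀U⟩ := hex
      have hne : z ≠ F x₀ := fun hc => hz (hc ▸ Set.mem_image_of_mem F hx₀s)
      refine ⟨U ∩ {F x₀}ᶜ, ?_, hU.inter isClosed_singleton.isOpen_compl, hzU, hne⟩
      rintro w ⟨hwU, hwne⟩ hmem
      obtain ⟨x', hx's, rfl⟩ := hmem
      have : x' = x₀ := hsub hwU hx₀U
      exact hwne (by rw [this]; rfl)
    · refine ⟨U, ?_, hU, hzU⟩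
      intro w hwU hmem
      obtain ⟨x', hx's, rfl⟩ := hmem
      exact hex ⟨x', hx's, hwU⟩
  have hsep : ∀ Ts : Set (ℕ → Bool), ∃ UV : Set Z × Set Z,
      IsOpen UV.1 ∧ IsOpen UV.2 ∧ F '' Ts ⊆ UV.1 ∧ F '' Tsᶜ ⊆ UV.2 ∧ Disjoint UV.1 UV.2 := by
    intro Ts
    have hdisj : Disjoint (F '' Ts) (F '' Tsᶜ) := by
      rw [Set.disjoint_left]
      rintro w ⟨x1, hx1, rfl⟩ ⟨x2, hx2, heq⟩
      exact hx2 (hFinj heq ▸ hx1)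
    obtain ⟨U, V, hU, hV, hsubU, hsubV, hUV⟩ :=
      hnorm.normal (F '' Ts) (F '' Tsᶜ) (hcl Ts) (hcl Tsᶜ) hdisj
    exact ⟨(U, V), hU, hV, hsubU, hsubV, hUV⟩
  choose UV hUV1 hUV2 hUV3 hUV4 hUV5 using hsep
  haveI : Countable ↥S := hSc.to_subtype
  obtain ⟨ν, hν⟩ := (countable_iff_exists_injective ↥S).mp inferInstance
  set Φ : Set (ℕ → Bool) → Set ℕ := fun Ts => ν '' {s : ↥S | (s : Z) ∈ (UV Ts).1} with hΦ
  have hΦmono : ∀ T1 T2 : Set (ℕ → Bool), Φ T1 = Φ T2 → T1 ⊆ T2 := by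
    intro T1 T2 heq x hx1
    by_contra hx2
    have hFx1 : F x ∈ (UV T1).1 := hUV3 T1 (Set.mem_image_of_mem F hx1)
    have hFx2 : F x ∈ (UV T2).2 := hUV4 T2 (Set.mem_image_of_mem F hx2)
    obtain ⟨w, hwO, hwS⟩ := hSd.inter_open_nonempty _ ((hUV1 T1).inter (hUV2 T2))
      ⟨F x, hFx1, hFx2⟩
    have hmem : ν ⟨w, hwS⟩ ∈ Φ T1 := ⟨⟨w, hwS⟩, hwO.1, rfl⟩
    rw [heq] at hmem
    obtain ⟨s₂, hs₂, hνeq⟩ := hmem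
    have : s₂ = ⟨w, hwS⟩ := hν hνeq
    rw [this] at hs₂
    exact Set.disjoint_left.mp (hUV5 T2) hs₂ hwO.2
  have hΦinj : Function.Injective Φ := by
    intro T1 T2 heq
    exact le_antisymm (hΦmono T1 T2 heq) (hΦmono T2 T1 heq.symm)
  have hθ : Function.Injective (fun Ts : Set (ℕ → Bool) => (fun n => decide (n ∈ Φ Ts) : ℕ → Bool)) := by
    intro T1 T2 heq
    apply hΦinj
    ext n
    have := congrFun heq n
    simpa using this
  exact Function.cantor_injective _ hθ

/-- Let `Y` be a separable non-compact metric space, `X` a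
`Y`-z-Tychonoff metrizable compact space, and `H ⊆ Y^X` (pointwise topology)
containing `B₁ˢᵗ(X,Y)`. Then `H` is normal iff `X` is countable, in which case
`H = Y^X`. -/
theorem baire_stable_normal_iff_countable {X : Type u} {Y : Type v}
    [TopologicalSpace X] [MetricSpace Y] [TopologicalSpace.SeparableSpace Y]
    (hYnc : ¬ CompactSpace Y)
    [TopologicalSpace.MetrizableSpace X] [CompactSpace X]
    (hXT : YzTychonoff X Y)
    (H : Set (X → Y)) (hH : BaireOneStable X Y ⊆ H) :
    ((T1Space ↥H ∧ NormalSpace ↥H) ↔ Countable X) ∧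
    (Countable X → H = Set.univ) := by
  classical
  have hpart2 : Countable X → H = Set.univ := by
    intro hc
    haveI := hc
    rw [Set.eq_univ_iff_forall]
    intro f
    apply hH
    rcases isEmpty_or_nonempty X with hE | hNe
    · refine ⟨fun _ => f, fun _ => ?_, fun x => isEmptyElim x⟩
      rw [continuous_def]
      intro s _
      rw [Set.eq_empty_of_isEmpty (f ⁻¹' s)]
      exact isOpen_empty
    · letI : MetricSpace X := TopologicalSpace.metrizableSpaceMetric X
      obtain ⟨e, he⟩ := exists_surjective_nat X
      have hstep : ∀ n : ℕ, ∃ g : X → Y, Continuous g ∧ ∀ i ≤ n, g (e i) = f (e i) := by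
        intro n
        set s := (Finset.range (n+1)).image e with hs
        set eqv := s.equivFin with heqv
        obtain ⟨g, hgc, -, hgF⟩ := hXT.2 ∅ isClosed_empty s.card
          (fun i => {(eqv.symm i : X)})
          (fun i => auxZero isClosed_singleton)
          (fun i j hij => by
            rw [Set.disjoint_singleton]
            intro hc
            exact hij (by
              have h9 : eqv.symm i = eqv.symm j := Subtype.ext hc
              exact eqv.symm.injective h9))
          (by rw [Set.compl_empty]; exact Set.subset_univ _)
          (f (e 0)) (fun i => f (eqv.symm i : X))
        refine ⟨g, hgc, ?_⟩
        intro i hi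
        have hmem : e i ∈ s := Finset.mem_image.mpr ⟨i, Finset.mem_range.mpr (by omega), rfl⟩
        have h8 : ((eqv.symm (eqv ⟨e i, hmem⟩)) : X) = e i := by rw [Equiv.symm_apply_apply]
        have h7 := hgF (eqv ⟨e i, hmem⟩) (Set.mem_image_of_mem g (Set.mem_singleton _))
        rw [h8] at h7
        simpa using h7
      choose g hgc hgf using hstep
      refine ⟨g, hgc, ?_⟩
      intro x
      obtain ⟨k, rfl⟩ := he x
      apply (Set.finite_Iio k).subset
      intro n hn
      simp only [Set.mem_setOf_eq] at hn
      by_contra hcon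
      simp only [Set.mem_Iio, not_lt] at hcon
      exact hn (hgf n k hcon)
  refine ⟨⟨?_, ?_⟩, hpart2⟩
  · rintro ⟨hT1, hNorm⟩
    by_contra hXc
    haveI : T1Space ↥H := hT1
    letI : MetricSpace X := TopologicalSpace.metrizableSpaceMetric X
    haveI : PolishSpace X := inferInstance
    have hXuru : ¬ (Set.univ : Set X).Countable := by
      rwa [Set.countable_univ_iff]
    obtain ⟨ψ, -, hψc, hψi⟩ := isClosed_univ.exists_nat_bool_injection_of_not_countable hXuru
    obtain ⟨y, hyinj, hyfin⟩ := auxEscape hYnc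
    have hXne : Nonempty X := by
      by_contra h
      rw [not_nonempty_iff] at h
      exact hXc (by haveI := h; infer_instance)
    haveI := hXne
    have hYne : Nonempty Y := by
      rcases isEmpty_or_nonempty Y with hE | hNe
      · haveI := hE
        exact absurd (inferInstance : CompactSpace Y) hYnc
      · exact hNe
    haveI := hYne
    haveI : SeparableSpace X := inferInstance
    obtain ⟨T, hTc, hTcont, hTd⟩ := auxDense hXT
    have hTmemH : ∀ f ∈ T, f ∈ H := fun f hf => hH (auxContMem (hTcont f hf))
    set SZ : Set ↥H := Subtype.val ⁻¹' T with hSZ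
    have hSZc : SZ.Countable := hTc.preimage Subtype.val_injective
    have hSZd : Dense SZ := by
      rw [dense_iff_inter_open]
      intro U hU hUne
      obtain ⟨V, hV, hVeq⟩ := isOpen_induced_iff.mp hU
      obtain ⟨z, hz⟩ := hUne
      rw [← hVeq] at hz
      obtain ⟨f, hf⟩ := hTd.inter_open_nonempty V hV ⟨(z : X → Y), hz⟩
      refine ⟨⟨f, hTmemH f hf.2⟩, ?_, hf.2⟩
      rw [← hVeq]
      exact hf.1
    have hFmem : ∀ x : ℕ → Bool, caF ψ y x ∈ H := fun x => hH (auxFtilMem hXT hψc hψi y x)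
    set F' : (ℕ → Bool) → ↥H := fun x => ⟨caF ψ y x, hFmem x⟩ with hF'
    have hF'inj : Function.Injective F' := by
      intro x1 x2 heq
      have heq' : caF ψ y x1 = caF ψ y x2 := congrArg Subtype.val heq
      by_contra hne
      have h1 : caF ψ y x1 (ψ x2) = y (caDelta x1 x2 + 1) := by
        rw [caF_apply hψi, if_neg (Ne.symm hne)]
      have h2 : caF ψ y x2 (ψ x2) = y 0 := by
        rw [caF_apply hψi, if_pos rfl]
      rw [heq', h2] at h1
      exact Nat.succ_ne_zero _ (hyinj h1).symm
    have hdiscZ : ∀ z : ↥H, ∃ U : Set ↥H, IsOpen U ∧ z ∈ U ∧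
        {x : ℕ → Bool | F' x ∈ U}.Subsingleton := by
      intro z
      obtain ⟨W, hWo, hWm, hWs⟩ := auxDiscrete hψi (auxIso hyinj hyfin) (auxOut hyfin)
        (z : X → Y)
      exact ⟨Subtype.val ⁻¹' W, hWo.preimage continuous_subtype_val, hWm,
        fun a ha b hb => hWs ha hb⟩
    exact (auxJones hNorm hSZc hSZd hF'inj hdiscZ).elim
  · intro hc
    haveI := hc
    haveI : MetrizableSpace (X → Y) := by
      letI : Encodable X := Encodable.ofCountable X
      exact inferInstance
    letI : MetricSpace ↥H := TopologicalSpace.metrizableSpaceMetric ↥H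
    exact ⟨inferInstance, inferInstance⟩
end

section
/- Let X be a Polish space (a separable completely metrizable topological space). Then B_1(X) = B_1(X,ℝ), the space of real-valued Baire class one functions on X with the topology of pointwise convergence, is a normal space if and only if X is countable; in that case B_1(X) = ℝ^X and is a separable metrizable space. -/
open Set Filter Topology TopologicalSpace

universe u v

section Aux
variable {X : Type u} [MetricSpace X]

lemma aux_finmin {α : Type*} (F : Finset α) (f : α → ℝ) (hf : ∀ y ∈ F, 0 < f y) :
    ∃ δ : ℝ, 0 < δ ∧ ∀ y ∈ F, δ ≤ f y := by
  rcases F.eq_empty_or_nonempty with h | h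
  · exact ⟨1, one_pos, by simp [h]⟩
  · refine ⟨F.inf' h f, ?_, fun y hy => Finset.inf'_le f hy⟩
    rw [Finset.lt_inf'_iff]
    exact hf

lemma aux_interp (F : Finset X) (g : X → ℝ) :
    ∃ h : X → ℝ, Continuous h ∧ ∀ y ∈ F, h y = g y := by
  classical
  induction F using Finset.induction_on with
  | empty => exact ⟨fun _ => 0, continuous_const, by simp⟩
  | @insert a F ha IH =>
    obtain ⟨h, hc, hval⟩ := IH
    rcases F.eq_empty_or_nonempty with hF | hF
    · exact ⟨fun _ => g a, continuous_const, by simp [hF]⟩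
    · have hδpos : 0 < F.inf' hF (fun y => dist a y) := by
        rw [Finset.lt_inf'_iff]
        intro y hy
        exact dist_pos.2 (fun he => ha (he ▸ hy))
      set δ := F.inf' hF (fun y => dist a y) with hδ
      set φ : X → ℝ := fun x => max 0 (1 - dist x a / δ) with hφ
      have hφc : Continuous φ :=
        continuous_const.max
          (continuous_const.sub ((continuous_id.dist continuous_const).div_const δ))
      have hφa : φ a = 1 := by simp [hφ]
      have hφy : ∀ y ∈ F, φ y = 0 := by
        intro y hy
        have h1 : δ ≤ dist y a := by
          rw [dist_comm]; exact Finset.inf'_le _ hy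
        have h2 : (1:ℝ) ≤ dist y a / δ := (one_le_div hδpos).2 h1
        have : 1 - dist y a / δ ≤ 0 := by linarith
        simp [hφ, max_eq_left this]
      refine ⟨fun x => h x + (g a - h a) * φ x, hc.add (continuous_const.mul hφc), ?_⟩
      intro y hy
      rcases Finset.mem_insert.1 hy with rfl | hy
      · simp [hφa]
      · simp [hφy y hy, hval y hy]

lemma aux_baireOne_univ [Countable X] : BaireOne X ℝ = Set.univ := by
  classical
  ext g
  simp only [Set.mem_univ, iff_true]
  cases isEmpty_or_nonempty X with
  | inl h => exact ⟨fun _ _ => 0, fun _ => continuous_const, fun x => h.elim x⟩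
  | inr h =>
    obtain ⟨u, hu⟩ := exists_surjective_nat X
    choose f hc hval using fun n : ℕ => aux_interp ((Finset.range (n+1)).image u) g
    refine ⟨f, hc, fun x => ?_⟩
    obtain ⟨k, rfl⟩ := hu x
    apply tendsto_atTop_of_eventually_const (i₀ := k)
    intro n hn
    exact hval n (u k) (Finset.mem_image_of_mem u (Finset.mem_range.2 (Nat.lt_succ_of_le hn)))

lemma aux_indicator_baireOne {K : Set X} (hK : IsClosed K) (hne : K.Nonempty) :
    K.indicator (fun _ => (1:ℝ)) ∈ BaireOne X ℝ := by
  classical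
  refine ⟨fun n x => max 0 (1 - n * Metric.infDist x K), fun n =>
    continuous_const.max (continuous_const.sub (continuous_const.mul (Metric.continuous_infDist_pt K))),
    fun x => ?_⟩
  by_cases hx : x ∈ K
  · have h0 : Metric.infDist x K = 0 := Metric.infDist_zero_of_mem hx
    have : ∀ n : ℕ, max 0 (1 - (n:ℝ) * Metric.infDist x K) = 1 := by
      intro n; rw [h0]; norm_num
    simp only [this, Set.indicator_of_mem hx]
    exact tendsto_const_nhds
  · have hpos : 0 < Metric.infDist x K := (hK.notMem_iff_infDist_pos hne).1 hx
    rw [Set.indicator_of_notMem hx]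
    apply tendsto_atTop_of_eventually_const (i₀ := ⌈(Metric.infDist x K)⁻¹⌉₊)
    intro n hn
    have h1 : (Metric.infDist x K)⁻¹ ≤ (n:ℝ) := le_trans (Nat.le_ceil _) (by exact_mod_cast hn)
    have h2 : 1 ≤ (n:ℝ) * Metric.infDist x K := by
      rw [← inv_mul_cancel₀ (ne_of_gt hpos)]
      exact mul_le_mul_of_nonneg_right h1 hpos.le
    have : 1 - (n:ℝ) * Metric.infDist x K ≤ 0 := by linarith
    simp [max_eq_left this]

lemma aux_fsigma_Ioi {g : X → ℝ} (hg : g ∈ BaireOne X ℝ) (a : ℝ) :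
    ∃ K : ℕ × ℕ → Set X, (∀ p, IsClosed (K p)) ∧ g ⁻¹' (Set.Ioi a) = ⋃ p, K p := by
  obtain ⟨f, hfc, hfl⟩ := hg
  refine ⟨fun p => ⋂ n, ⋂ (_ : p.2 ≤ n), f n ⁻¹' (Set.Ici (a + 1/(p.1+1))), fun p =>
    isClosed_iInter fun n => isClosed_iInter fun _ => (isClosed_Ici.preimage (hfc n)), ?_⟩
  ext x
  simp only [Set.mem_preimage, Set.mem_Ioi, Set.mem_iUnion, Set.mem_iInter, Set.mem_Ici]
  constructor
  · intro hx
    obtain ⟨k, hk⟩ := exists_nat_one_div_lt (show (0:ℝ) < (g x - a)/2 by linarith)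
    have hklt : a + 1/((k:ℝ)+1) < g x := by
      have : (0:ℝ) < (g x - a) / 2 := by linarith
      nlinarith [hk]
    have hev : ∀ᶠ n in atTop, a + 1/((k:ℝ)+1) < f n x :=
      (hfl x).eventually (eventually_gt_nhds hklt)
    obtain ⟨N, hN⟩ := eventually_atTop.1 hev
    exact ⟨(k, N), fun n hn => (hN n hn).le⟩
  · rintro ⟨⟨k, N⟩, hkN⟩
    have hge : a + 1/((k:ℝ)+1) ≤ g x :=
      ge_of_tendsto (hfl x) (eventually_atTop.2 ⟨N, fun n hn => hkN n hn⟩)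
    have : (0:ℝ) < 1/((k:ℝ)+1) := by positivity
    linarith

lemma aux_fsigma_Iio {g : X → ℝ} (hg : g ∈ BaireOne X ℝ) (a : ℝ) :
    ∃ K : ℕ × ℕ → Set X, (∀ p, IsClosed (K p)) ∧ g ⁻¹' (Set.Iio a) = ⋃ p, K p := by
  obtain ⟨f, hfc, hfl⟩ := hg
  refine ⟨fun p => ⋂ n, ⋂ (_ : p.2 ≤ n), f n ⁻¹' (Set.Iic (a - 1/(p.1+1))), fun p =>
    isClosed_iInter fun n => isClosed_iInter fun _ => (isClosed_Iic.preimage (hfc n)), ?_⟩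
  ext x
  simp only [Set.mem_preimage, Set.mem_Iio, Set.mem_iUnion, Set.mem_iInter, Set.mem_Iic]
  constructor
  · intro hx
    obtain ⟨k, hk⟩ := exists_nat_one_div_lt (show (0:ℝ) < (a - g x)/2 by linarith)
    have hklt : g x < a - 1/((k:ℝ)+1) := by nlinarith [hk]
    have hev : ∀ᶠ n in atTop, f n x < a - 1/((k:ℝ)+1) :=
      (hfl x).eventually (eventually_lt_nhds hklt)
    obtain ⟨N, hN⟩ := eventually_atTop.1 hev
    exact ⟨(k, N), fun n hn => (hN n hn).le⟩
  · rintro ⟨⟨k, N⟩, hkN⟩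
    have hge : g x ≤ a - 1/((k:ℝ)+1) :=
      le_of_tendsto (hfl x) (eventually_atTop.2 ⟨N, fun n hn => hkN n hn⟩)
    have : (0:ℝ) < 1/((k:ℝ)+1) := by positivity
    linarith

end Aux

section Vec

def vle (v u : ℕ → Bool) : Prop := ∀ i, v i = true → u i = true

def vsup (v u : ℕ → Bool) : ℕ → Bool := fun i => v i || u i

def vbot : ℕ → Bool := fun _ => false

noncomputable def vsingle (j : ℕ) : ℕ → Bool := fun i => if i = j then true else false

noncomputable def vcode (z : ℕ → Bool) : ℕ → Bool :=
  fun j => if j % 2 = 0 then z (j/2) else !z (j/2)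

lemma vle_refl (v : ℕ → Bool) : vle v v := fun _ h => h

lemma vle_trans {v u t : ℕ → Bool} (h1 : vle v u) (h2 : vle u t) : vle v t :=
  fun i hi => h2 i (h1 i hi)

lemma vbot_le (v : ℕ → Bool) : vle vbot v := fun i hi => by simp [vbot] at hi

lemma vsingle_le_iff {j : ℕ} {u : ℕ → Bool} : vle (vsingle j) u ↔ u j = true := by
  constructor
  · intro h; exact h j (by simp [vsingle])
  · intro h i hi
    simp only [vsingle] at hi
    split at hi
    · subst ‹i = j›; exact h
    · exact absurd hi (by simp)

lemma vsingle_le_of {v : ℕ → Bool} {j : ℕ} (h : v j = true) : vle (vsingle j) v := by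
  intro i hi
  simp only [vsingle] at hi
  split at hi
  · subst ‹i = j›; exact h
  · exact absurd hi (by simp)

lemma vsup_le_iff {v u t : ℕ → Bool} : vle (vsup v u) t ↔ vle v t ∧ vle u t := by
  constructor
  · intro h
    exact ⟨fun i hi => h i (by simp [vsup, hi]), fun i hi => h i (by simp [vsup, hi])⟩
  · rintro ⟨h1, h2⟩ i hi
    simp only [vsup, Bool.or_eq_true] at hi
    rcases hi with hi | hi
    · exact h1 i hi
    · exact h2 i hi

lemma vcode_two (z : ℕ → Bool) (i : ℕ) : vcode z (2*i) = z i := by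
  have h1 : (2*i) % 2 = 0 := by omega
  have h2 : (2*i) / 2 = i := by omega
  simp [vcode, h1, h2]

lemma vcode_two_succ (z : ℕ → Bool) (i : ℕ) : vcode z (2*i+1) = !z i := by
  have h1 : (2*i+1) % 2 = 1 := by omega
  have h2 : (2*i+1) / 2 = i := by omega
  simp [vcode, h1, h2]

lemma vcode_le {w z : ℕ → Bool} (h : vle (vcode w) (vcode z)) : w = z := by
  funext i
  cases hw : w i with
  | true =>
    have := h (2*i) (by rw [vcode_two, hw])
    rw [vcode_two] at this
    rw [this]
  | false =>
    have := h (2*i+1) (by rw [vcode_two_succ, hw]; rfl)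
    rw [vcode_two_succ] at this
    cases hz : z i with
    | true => rw [hz] at this; simp at this
    | false => rfl

lemma isClosed_vle (a : ℕ → Bool) : IsClosed {v : ℕ → Bool | vle v a} := by
  have : {v : ℕ → Bool | vle v a} =
      ⋂ j, (fun v : ℕ → Bool => v j) ⁻¹' {b : Bool | b = true → a j = true} := by
    ext v; simp [vle]
  rw [this]
  exact isClosed_iInter fun j => (isClosed_discrete _).preimage (continuous_apply j)

end Vec

section Key

variable {X : Type u} [MetricSpace X]

/-- The characteristic function of `e''{v ≤ code z}`. -/
noncomputable def czind (e : (ℕ → Bool) → X) (z : ℕ → Bool) : X → ℝ :=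
  (e '' {v | vle v (vcode z)}).indicator (fun _ => (1:ℝ))

lemma aux_key (e : (ℕ → Bool) → X) (hec : Continuous e) (hei : Function.Injective e)
    (T : Set (ℕ → Bool)) (g : X → ℝ) (hg : g ∈ BaireOne X ℝ)
    (happ : ∀ (F : Finset X) (ε : ℝ), 0 < ε → ∃ z ∈ T,
      ∀ y ∈ F, |czind e z y - g y| < ε) :
    ∃ z ∈ T, g = czind e z := by
  classical
  have hfval : ∀ z y, czind e z y = 0 ∨ czind e z y = 1 := by
    intro z y
    by_cases h : y ∈ e '' {v | vle v (vcode z)}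
    · right; simp only [czind]; rw [Set.indicator_of_mem h]
    · left; simp only [czind]; rw [Set.indicator_of_notMem h]
  have hmemiff : ∀ z v, (e v ∈ e '' {v | vle v (vcode z)}) ↔ vle v (vcode z) :=
    fun z v => hei.mem_set_image
  have hfe : ∀ z v, czind e z (e v) = 1 ↔ vle v (vcode z) := by
    intro z v
    by_cases h : vle v (vcode z)
    · simp only [czind]
      rw [Set.indicator_of_mem ((hmemiff z v).2 h)]
      simp [h]
    · simp only [czind]
      rw [Set.indicator_of_notMem (fun hm => h ((hmemiff z v).1 hm))]
      simp only [h, iff_false]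
      norm_num
  have hfnr : ∀ z y, y ∉ Set.range e → czind e z y = 0 := by
    intro z y hy
    have : y ∉ e '' {v | vle v (vcode z)} := fun hm => hy (Set.image_subset_range e _ hm)
    simp only [czind]
    rw [Set.indicator_of_notMem this]
  -- values of g
  have hgval : ∀ y, g y = 0 ∨ g y = 1 := by
    intro y
    by_contra hcon
    push_neg at hcon
    obtain ⟨h0, h1⟩ := hcon
    have hε : (0:ℝ) < min |g y| |g y - 1| := by
      apply lt_min
      · exact abs_pos.2 h0
      · exact abs_pos.2 (sub_ne_zero.2 h1)
    obtain ⟨z, _, hz⟩ := happ {y} _ hε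
    have := hz y (Finset.mem_singleton_self y)
    rcases hfval z y with h | h <;> rw [h] at this
    · have h' : |g y| ≤ |(0:ℝ) - g y| := by rw [zero_sub, abs_neg]
      have := lt_of_le_of_lt h' this
      exact absurd this (not_lt.2 (min_le_left _ _))
    · have h' : |g y - 1| ≤ |(1:ℝ) - g y| := by rw [abs_sub_comm]
      have := lt_of_le_of_lt h' this
      exact absurd this (not_lt.2 (min_le_right _ _))
  -- exact matching
  have hex : ∀ F : Finset X, ∃ z ∈ T, ∀ y ∈ F, czind e z y = g y := by
    intro F
    obtain ⟨z, hzT, hz⟩ := happ F (1/2) (by norm_num)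
    refine ⟨z, hzT, fun y hy => ?_⟩
    have hlt := hz y hy
    rcases hfval z y with h1 | h1 <;> rcases hgval y with h2 | h2 <;>
      rw [h1, h2] at hlt ⊢ <;> first | rfl | (norm_num at hlt)
  -- the trace set
  set B' : Set (ℕ → Bool) := {v | g (e v) = 1} with hB'
  have hnot : ∀ v, v ∉ B' → g (e v) = 0 := by
    intro v hv
    rcases hgval (e v) with h | h
    · exact h
    · exact absurd h hv
  have hbot : vbot ∈ B' := by
    obtain ⟨z, _, hz⟩ := hex {e vbot}
    have := hz (e vbot) (Finset.mem_singleton_self _)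
    rw [(hfe z vbot).2 (vbot_le _)] at this
    exact this.symm
  have hdown : ∀ v v', vle v' v → v ∈ B' → v' ∈ B' := by
    intro v v' hle hv
    obtain ⟨z, _, hz⟩ := hex {e v, e v'}
    have h1 := hz (e v) (Finset.mem_insert_self _ _)
    have h2 := hz (e v') (Finset.mem_insert_of_mem (Finset.mem_singleton_self _))
    rw [hv] at h1
    have hvz : vle v (vcode z) := (hfe z v).1 h1
    have : czind e z (e v') = 1 := (hfe z v').2 (vle_trans hle hvz)
    rw [this] at h2
    exact h2.symm
  have hsup : ∀ v v', v ∈ B' → v' ∈ B' → vsup v v' ∈ B' := by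
    intro v v' hv hv'
    obtain ⟨z, _, hz⟩ := hex {e v, e v', e (vsup v v')}
    have h1 := hz (e v) (by simp)
    have h2 := hz (e v') (by simp)
    have h3 := hz (e (vsup v v')) (by simp)
    rw [hv] at h1
    rw [hv'] at h2
    have hvz : vle v (vcode z) := (hfe z v).1 h1
    have hvz' : vle v' (vcode z) := (hfe z v').1 h2
    have : czind e z (e (vsup v v')) = 1 := (hfe z _).2 (vsup_le_iff.2 ⟨hvz, hvz'⟩)
    rw [this] at h3
    exact h3.symm
  have hpair : ∀ i : ℕ, (vsingle (2*i) ∈ B' ∧ vsingle (2*i+1) ∉ B') ∨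
      (vsingle (2*i) ∉ B' ∧ vsingle (2*i+1) ∈ B') := by
    intro i
    obtain ⟨z, _, hz⟩ := hex {e (vsingle (2*i)), e (vsingle (2*i+1))}
    have h1 := hz (e (vsingle (2*i))) (by simp)
    have h2 := hz (e (vsingle (2*i+1))) (by simp)
    cases hzi : z i with
    | true =>
      left
      constructor
      · have : czind e z (e (vsingle (2*i))) = 1 :=
          (hfe z _).2 (vsingle_le_iff.2 (by rw [vcode_two, hzi]))
        rw [this] at h1; exact h1.symm
      · intro hmem
        rw [hmem] at h2
        have : vle (vsingle (2*i+1)) (vcode z) := (hfe z _).1 h2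
        have := vsingle_le_iff.1 this
        rw [vcode_two_succ, hzi] at this
        simp at this
    | false =>
      right
      constructor
      · intro hmem
        rw [hmem] at h1
        have : vle (vsingle (2*i)) (vcode z) := (hfe z _).1 h1
        have := vsingle_le_iff.1 this
        rw [vcode_two, hzi] at this
        simp at this
      · have : czind e z (e (vsingle (2*i+1))) = 1 :=
          (hfe z _).2 (vsingle_le_iff.2 (by rw [vcode_two_succ, hzi]; rfl))
        rw [this] at h2; exact h2.symm
  set w : ℕ → Bool := fun i => if vsingle (2*i) ∈ B' then true else false with hw
  have hsingle : ∀ j, (vsingle j ∈ B' ↔ vcode w j = true) := by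
    intro j
    rcases Nat.even_or_odd j with ⟨i, hi⟩ | ⟨i, hi⟩
    · have hj : j = 2*i := by omega
      subst hj
      rw [vcode_two]
      simp only [hw]
      split
      · simpa using ‹vsingle (2*i) ∈ B'›
      · simp only [Bool.false_eq_true, iff_false]; assumption
    · have hj : j = 2*i+1 := by omega
      subst hj
      rw [vcode_two_succ]
      simp only [hw]
      rcases hpair i with ⟨h1, h2⟩ | ⟨h1, h2⟩
      · simp [h1, h2]
      · simp [h1, h2]
  have hsubcw : ∀ v ∈ B', vle v (vcode w) := by
    intro v hv i hvi
    exact (hsingle i).1 (hdown v (vsingle i) (vsingle_le_of hvi) hv)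
  have hfin : ∀ s : Finset ℕ, ∀ v : ℕ → Bool, (∀ j, v j = true → j ∈ s) →
      vle v (vcode w) → v ∈ B' := by
    intro s
    induction s using Finset.induction_on with
    | empty =>
      intro v hsupp _
      have : v = vbot := by
        funext j
        cases hj : v j with
        | true => exact absurd (hsupp j hj) (Finset.notMem_empty j)
        | false => rfl
      rw [this]; exact hbot
    | @insert a s ha IH =>
      intro v hsupp hle
      set v' : ℕ → Bool := fun i => if i = a then false else v i with hv'
      have hle' : vle v' v := by
        intro i hi
        simp only [hv'] at hi
        split at hi
        · simp at hi
        · exact hi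
      have hsupp' : ∀ j, v' j = true → j ∈ s := by
        intro j hj
        simp only [hv'] at hj
        split at hj
        · simp at hj
        · rcases Finset.mem_insert.1 (hsupp j hj) with h | h
          · exact absurd h ‹¬ j = a›
          · exact h
      have hv'B : v' ∈ B' := IH v' hsupp' (vle_trans hle' hle)
      cases hva : v a with
      | false =>
        have : v = v' := by
          funext i
          simp only [hv']
          split
          · subst ‹i = a›; exact hva
          · rfl
        rw [this]; exact hv'B
      | true =>
        have hsa : vsingle a ∈ B' := (hsingle a).2 (hle a hva)
        have : v = vsup v' (vsingle a) := by
          funext i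
          simp only [vsup, hv', vsingle]
          by_cases hia : i = a
          · subst hia; simp [hva]
          · simp [hia]
        rw [this]
        exact hsup _ _ hv'B hsa
  by_cases hcw : vcode w ∈ B'
  · -- principal case
    have hBeq : ∀ v, vle v (vcode w) → v ∈ B' := by
      intro v hv
      obtain ⟨z, _, hz⟩ := hex {e v, e (vcode w)}
      have h1 := hz (e (vcode w)) (by simp)
      have h2 := hz (e v) (by simp)
      rw [hcw] at h1
      have hwz : vle (vcode w) (vcode z) := (hfe z _).1 h1
      have hwz' : w = z := vcode_le hwz
      have : czind e z (e v) = 1 := (hfe z v).2 (hwz' ▸ hv)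
      rw [this] at h2
      exact h2.symm
    obtain ⟨z, hzT, hz⟩ := hex {e (vcode w)}
    have h1 := hz (e (vcode w)) (Finset.mem_singleton_self _)
    rw [hcw] at h1
    have hwz : w = z := vcode_le ((hfe z _).1 h1)
    subst hwz
    refine ⟨w, hzT, ?_⟩
    funext y
    by_cases hy : y ∈ Set.range e
    · obtain ⟨v, rfl⟩ := hy
      rcases hgval (e v) with h | h
      · have hvB : v ∉ B' := by
          intro hvB
          rw [show g (e v) = 1 from hvB] at h
          norm_num at h
        have hnle : ¬ vle v (vcode w) := fun hle => hvB (hBeq v hle)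
        rw [h]
        have : czind e w (e v) ≠ 1 := fun h1 => hnle ((hfe w v).1 h1)
        rcases hfval w (e v) with h0 | h1
        · exact h0.symm
        · exact absurd h1 this
      · rw [h]
        exact ((hfe w v).2 (hsubcw v h)).symm
    · obtain ⟨z', _, hz'⟩ := hex {y}
      have := hz' y (Finset.mem_singleton_self _)
      rw [hfnr z' y hy] at this
      rw [← this, hfnr w y hy]
  · -- non-principal case: contradiction via Baire category
    exfalso
    obtain ⟨K1, hK1cl, hK1eq⟩ := aux_fsigma_Ioi hg (1/2)
    obtain ⟨K0, hK0cl, hK0eq⟩ := aux_fsigma_Iio hg (1/2)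
    set S : Set (ℕ → Bool) := {v | vle v (vcode w)} with hS
    haveI : CompactSpace ↥S := isCompact_iff_compactSpace.1 (isClosed_vle (vcode w)).isCompact
    haveI : Nonempty ↥S := ⟨⟨vbot, vbot_le _⟩⟩
    haveI : LocallyCompactSpace ↥S := inferInstance
    set c : ((ℕ × ℕ) ⊕ (ℕ × ℕ)) → Set ↥S :=
      Sum.elim (fun p => {v : ↥S | e ↑v ∈ K1 p}) (fun p => {v : ↥S | e ↑v ∈ K0 p}) with hc
    have hccl : ∀ q, IsClosed (c q) := by
      rintro (p | p)
      · exact (hK1cl p).preimage (hec.comp continuous_subtype_val)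
      · exact (hK0cl p).preimage (hec.comp continuous_subtype_val)
    have hcov : ⋃ q, c q = Set.univ := by
      apply Set.eq_univ_iff_forall.2
      intro v
      rcases hgval (e ↑v) with h | h
      · have : e ↑v ∈ g ⁻¹' (Set.Iio (1/2)) := by
          simp only [Set.mem_preimage, Set.mem_Iio, h]; norm_num
        rw [hK0eq] at this
        obtain ⟨p, hp⟩ := Set.mem_iUnion.1 this
        exact Set.mem_iUnion.2 ⟨Sum.inr p, hp⟩
      · have : e ↑v ∈ g ⁻¹' (Set.Ioi (1/2)) := by
          simp only [Set.mem_preimage, Set.mem_Ioi, h]; norm_num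
        rw [hK1eq] at this
        obtain ⟨p, hp⟩ := Set.mem_iUnion.1 this
        exact Set.mem_iUnion.2 ⟨Sum.inl p, hp⟩
    obtain ⟨q, v₀, hv₀⟩ := nonempty_interior_of_iUnion_of_closed hccl hcov
    obtain ⟨U, hUopen, hUeq⟩ := isOpen_induced_iff.1 (isOpen_interior (s := c q))
    have hv₀U : (v₀ : ℕ → Bool) ∈ U := by
      rw [← hUeq] at hv₀
      exact hv₀
    obtain ⟨I, uu, hIuu, hpi⟩ := isOpen_pi_iff.1 hUopen _ hv₀U
    cases q with
    | inl p =>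
      set y : ℕ → Bool := fun i => if i ∈ I then (v₀ : ℕ → Bool) i else vcode w i with hy
      have hyle : vle y (vcode w) := by
        intro i hi
        simp only [hy] at hi
        split at hi
        · exact v₀.2 i hi
        · exact hi
      have hyU : y ∈ U := by
        apply hpi
        intro a ha
        simp only [hy, Finset.mem_coe.1 ha, if_pos]
        exact (hIuu a ha).2
      have hyint : (⟨y, hyle⟩ : ↥S) ∈ interior (c (Sum.inl p)) := by
        rw [← hUeq]
        exact hyU
      have hymem : (⟨y, hyle⟩ : ↥S) ∈ c (Sum.inl p) := interior_subset hyint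
      have hyK : e y ∈ K1 p := hymem
      have hyg : g (e y) = 1 := by
        have : e y ∈ g ⁻¹' (Set.Ioi (1/2)) := by
          rw [hK1eq]
          exact Set.mem_iUnion.2 ⟨p, hyK⟩
        simp only [Set.mem_preimage, Set.mem_Ioi] at this
        rcases hgval (e y) with h | h
        · rw [h] at this; norm_num at this
        · exact h
      have hyB : y ∈ B' := hyg
      set h' : ℕ → Bool := fun i => if i ∈ I then vcode w i else false with hh'
      have hh'supp : ∀ j, h' j = true → j ∈ I := by
        intro j hj
        simp only [hh'] at hj
        split at hj
        · assumption
        · simp at hj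
      have hh'le : vle h' (vcode w) := by
        intro i hi
        simp only [hh'] at hi
        split at hi
        · exact hi
        · simp at hi
      have hh'B : h' ∈ B' := hfin I h' hh'supp hh'le
      have hsupeq : vsup y h' = vcode w := by
        funext i
        simp only [vsup, hy, hh']
        by_cases hi : i ∈ I
        · simp only [hi, if_pos]
          cases hb : (v₀ : ℕ → Bool) i with
          | false => simp
          | true => simp [v₀.2 i hb]
        · simp [hi]
      exact hcw (hsupeq ▸ hsup y h' hyB hh'B)
    | inr p =>
      set y : ℕ → Bool := fun i => if i ∈ I then (v₀ : ℕ → Bool) i else false with hy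
      have hyle : vle y (vcode w) := by
        intro i hi
        simp only [hy] at hi
        split at hi
        · exact v₀.2 i hi
        · simp at hi
      have hysupp : ∀ j, y j = true → j ∈ I := by
        intro j hj
        simp only [hy] at hj
        split at hj
        · assumption
        · simp at hj
      have hyB : y ∈ B' := hfin I y hysupp hyle
      have hyU : y ∈ U := by
        apply hpi
        intro a ha
        simp only [hy, Finset.mem_coe.1 ha, if_pos]
        exact (hIuu a ha).2
      have hyint : (⟨y, hyle⟩ : ↥S) ∈ interior (c (Sum.inr p)) := by
        rw [← hUeq]
        exact hyU
      have hymem : (⟨y, hyle⟩ : ↥S) ∈ c (Sum.inr p) := interior_subset hyint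
      have hyK : e y ∈ K0 p := hymem
      have hyg : g (e y) < 1/2 := by
        have : e y ∈ g ⁻¹' (Set.Iio (1/2)) := by
          rw [hK0eq]
          exact Set.mem_iUnion.2 ⟨p, hyK⟩
        simpa using this
      rw [show g (e y) = 1 from hyB] at hyg
      norm_num at hyg

end Key
section Dense

variable {X : Type u} [MetricSpace X]

noncomputable def plateau (c : X) (r : ℚ) (x : X) : ℝ :=
  max 0 (min 1 (2 - 2 * dist x c / (r:ℝ)))

lemma plateau_continuous (c : X) (r : ℚ) : Continuous (plateau c r) :=
  continuous_const.max (continuous_const.min (continuous_const.sub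
    ((continuous_const.mul (continuous_id.dist continuous_const)).div_const _)))

lemma plateau_eq_one {c : X} {r : ℚ} (hr : 0 < (r:ℝ)) {x : X} (h : dist x c ≤ (r:ℝ)/2) :
    plateau c r x = 1 := by
  have h1 : 2 * dist x c / (r:ℝ) ≤ 1 := by
    rw [div_le_one hr]; linarith
  have h2 : (1:ℝ) ≤ 2 - 2 * dist x c / (r:ℝ) := by linarith
  unfold plateau
  rw [min_eq_left h2, max_eq_right (by norm_num : (0:ℝ) ≤ 1)]

lemma plateau_eq_zero {c : X} {r : ℚ} (hr : 0 < (r:ℝ)) {x : X} (h : (r:ℝ) ≤ dist x c) :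
    plateau c r x = 0 := by
  have h1 : (2:ℝ) ≤ 2 * dist x c / (r:ℝ) := by
    rw [le_div_iff₀ hr]; linarith
  have h2 : 2 - 2 * dist x c / (r:ℝ) ≤ 0 := by linarith
  have h3 : min 1 (2 - 2 * dist x c / (r:ℝ)) ≤ 0 := le_trans (min_le_right _ _) h2
  unfold plateau
  rw [max_eq_left h3]

lemma aux_approx (s : ℕ → X) (hs : DenseRange s) (g : X → ℝ) (F : Finset X)
    (ε : X → ℝ) (hε : ∀ y ∈ F, 0 < ε y) :
    ∃ L : Finset (ℕ × ℚ × ℚ),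
      ∀ y ∈ F, |(∑ p ∈ L, (p.2.1:ℝ) * plateau (s p.1) p.2.2 y) - g y| < ε y := by
  classical
  obtain ⟨ε₀, hε₀, hε₀le⟩ := aux_finmin F ε hε
  obtain ⟨δ, hδ, hδle⟩ := aux_finmin F.offDiag (fun p => dist p.1 p.2) (fun p hp => by
    rcases Finset.mem_offDiag.1 hp with ⟨_, _, hne⟩
    exact dist_pos.2 hne)
  obtain ⟨r, hr0, hr3⟩ := exists_rat_btwn (show (0:ℝ) < δ/3 by linarith)
  choose n hn using fun y : X => Metric.denseRange_iff.1 hs y ((r:ℝ)/2) (by linarith)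
  choose qv hqv using fun y : X => exists_rat_near (g y) hε₀
  have hinj : ∀ a ∈ F, ∀ b ∈ F, (n a, qv a, r) = (n b, qv b, r) → a = b := by
    intro a ha b hb hab
    by_contra hne
    have h1 : δ ≤ dist a b := hδle (a,b) (Finset.mem_offDiag.2 ⟨ha, hb, hne⟩)
    have hnab : n a = n b := (Prod.ext_iff.1 hab).1
    have htr : dist a b ≤ dist a (s (n b)) + dist (s (n b)) b := dist_triangle _ _ _
    have ha' : dist a (s (n b)) < (r:ℝ)/2 := by rw [← hnab]; exact hn a
    have hb' : dist (s (n b)) b < (r:ℝ)/2 := by rw [dist_comm]; exact hn b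
    linarith
  refine ⟨F.image (fun y => (n y, qv y, r)), ?_⟩
  intro y hy
  rw [Finset.sum_image hinj]
  rw [Finset.sum_eq_single y (fun b hb hbne => ?_) (fun hyF => absurd hy hyF)]
  · rw [plateau_eq_one hr0 (le_of_lt (hn y)), mul_one]
    calc |(qv y:ℝ) - g y| = |g y - (qv y:ℝ)| := abs_sub_comm _ _
    _ < ε₀ := hqv y
    _ ≤ ε y := hε₀le y hy
  · have h1 : δ ≤ dist b y := hδle (b,y) (Finset.mem_offDiag.2 ⟨hb, hy, hbne⟩)
    have htr : dist b y ≤ dist b (s (n b)) + dist (s (n b)) y := dist_triangle _ _ _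
    have hb' : dist b (s (n b)) < (r:ℝ)/2 := hn b
    have : (r:ℝ) ≤ dist y (s (n b)) := by
      rw [dist_comm]
      linarith
    rw [plateau_eq_zero hr0 this, mul_zero]

lemma aux_dense (s : ℕ → X) (hs : DenseRange s) :
    ∃ D : Set (X → ℝ), D.Countable ∧ (∀ d ∈ D, Continuous d) ∧
      ∀ (g : X → ℝ) (F : Finset X) (ε : X → ℝ), (∀ y ∈ F, 0 < ε y) →
        ∃ d ∈ D, ∀ y ∈ F, |d y - g y| < ε y := by
  classical
  refine ⟨Set.range (fun L : Finset (ℕ × ℚ × ℚ) =>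
    fun x => ∑ p ∈ L, (p.2.1:ℝ) * plateau (s p.1) p.2.2 x), Set.countable_range _, ?_, ?_⟩
  · rintro d ⟨L, rfl⟩
    exact continuous_finset_sum _ (fun p _ => continuous_const.mul (plateau_continuous _ _))
  · intro g F ε hε
    obtain ⟨L, hL⟩ := aux_approx s hs g F ε hε
    exact ⟨_, ⟨L, rfl⟩, hL⟩

end Dense
section Forward

lemma continuous_mem_baireOne' {X : Type u} [TopologicalSpace X] {f : X → ℝ}
    (hf : Continuous f) : f ∈ BaireOne X ℝ :=
  ⟨fun _ => f, fun _ => hf, fun _ => tendsto_const_nhds⟩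

lemma czind_eval_one {X : Type u} [MetricSpace X] {e : (ℕ → Bool) → X}
    (hei : Function.Injective e) (z v : ℕ → Bool) :
    czind e z (e v) = 1 ↔ vle v (vcode z) := by
  by_cases h : vle v (vcode z)
  · simp only [czind]
    rw [Set.indicator_of_mem (Set.mem_image_of_mem e (show v ∈ {v | vle v (vcode z)} from h))]
    simp [h]
  · simp only [czind]
    rw [Set.indicator_of_notMem (show e v ∉ e '' {v | vle v (vcode z)} from
      fun hm => h (hei.mem_set_image.1 hm))]
    simp only [h, iff_false]
    norm_num

lemma czind_inj {X : Type u} [MetricSpace X] {e : (ℕ → Bool) → X}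
    (hei : Function.Injective e) {z z' : ℕ → Bool} (h : czind e z = czind e z') : z = z' := by
  have h1 : czind e z (e (vcode z)) = 1 := (czind_eval_one hei z (vcode z)).2 (vle_refl _)
  have h2 : czind e z' (e (vcode z)) = 1 := by rw [← h]; exact h1
  exact vcode_le ((czind_eval_one hei z' (vcode z)).1 h2)

lemma aux_forward {X : Type u} [TopologicalSpace X] [PolishSpace X]
    (hnorm : NormalSpace ↥(BaireOne X ℝ)) : Countable X := by
  classical
  by_contra hX
  haveI : Nonempty X := by
    by_contra hne
    rw [not_nonempty_iff] at hne
    exact hX inferInstance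
  letI := upgradeIsCompletelyMetrizable X
  obtain ⟨e, -, hec, hei⟩ := isClosed_univ.exists_nat_bool_injection_of_not_countable
    (fun h => hX (Set.countable_univ_iff.1 h))
  have hKcl : ∀ z : ℕ → Bool, IsClosed (e '' {v | vle v (vcode z)}) := fun z =>
    (((isClosed_vle (vcode z)).isCompact).image hec).isClosed
  have hKne : ∀ z : ℕ → Bool, (e '' {v | vle v (vcode z)}).Nonempty := fun z =>
    ⟨e vbot, Set.mem_image_of_mem e (vbot_le _)⟩
  have hfB : ∀ z, czind e z ∈ BaireOne X ℝ := fun z =>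
    aux_indicator_baireOne (hKcl z) (hKne z)
  set BO := BaireOne X ℝ with hBO
  set SS : Set (ℕ → Bool) → Set ↥BO :=
    fun T => {x : ↥BO | ∃ z ∈ T, (x : X → ℝ) = czind e z} with hSS
  -- each SS T is closed
  have hclosedT : ∀ T, IsClosed (SS T) := by
    intro T
    apply isClosed_of_closure_subset
    intro x hx
    have happ : ∀ (F : Finset X) (ε : ℝ), 0 < ε → ∃ z ∈ T,
        ∀ y ∈ F, |czind e z y - (x : X → ℝ) y| < ε := by
      intro F ε hε
      have hVeq : {h : ↥BO | ∀ y ∈ F, |(h : X → ℝ) y - (x : X → ℝ) y| < ε} =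
          ⋂ y ∈ F, {h : ↥BO | |(h : X → ℝ) y - (x : X → ℝ) y| < ε} := by
        ext h; simp
      have hVopen : IsOpen {h : ↥BO | ∀ y ∈ F, |(h : X → ℝ) y - (x : X → ℝ) y| < ε} := by
        rw [hVeq]
        apply isOpen_biInter_finset
        intro y _
        have : {h : ↥BO | |(h : X → ℝ) y - (x : X → ℝ) y| < ε} =
            (fun h : ↥BO => (h : X → ℝ) y) ⁻¹'
              ((fun t : ℝ => |t - (x : X → ℝ) y|) ⁻¹' (Set.Iio ε)) := rfl
        rw [this]
        exact ((isOpen_Iio.preimage ((continuous_id.sub continuous_const).abs)).preimage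
          ((continuous_apply y).comp continuous_subtype_val))
      have hVmem : x ∈ {h : ↥BO | ∀ y ∈ F, |(h : X → ℝ) y - (x : X → ℝ) y| < ε} := by
        intro y _
        simpa using hε
      obtain ⟨x', hx'V, hx'S⟩ := mem_closure_iff.1 hx _ hVopen hVmem
      obtain ⟨z, hzT, hzeq⟩ := hx'S
      refine ⟨z, hzT, fun y hy => ?_⟩
      have := hx'V y hy
      rw [hzeq] at this
      simpa using this
    obtain ⟨z, hzT, hgeq⟩ := aux_key e hec hei T (x : X → ℝ) x.2 happ
    exact ⟨z, hzT, hgeq⟩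
  -- disjointness
  have hdisj : ∀ T, Disjoint (SS T) (SS Tᶜ) := by
    intro T
    rw [Set.disjoint_left]
    rintro x ⟨z, hzT, hzeq⟩ ⟨z', hz'T, hz'eq⟩
    have heq : czind e z = czind e z' := by rw [← hzeq, ← hz'eq]
    exact hz'T ((czind_inj hei heq) ▸ hzT)
  -- separation by normality
  have hsep : ∀ T : Set (ℕ → Bool), ∃ UV : Set ↥BO × Set ↥BO,
      IsOpen UV.1 ∧ IsOpen UV.2 ∧ SS T ⊆ UV.1 ∧ SS Tᶜ ⊆ UV.2 ∧ Disjoint UV.1 UV.2 := by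
    intro T
    obtain ⟨U, V, hU, hV, hTU, hTV, hUVd⟩ :=
      hnorm.normal (SS T) (SS Tᶜ) (hclosedT T) (hclosedT Tᶜ) (hdisj T)
    exact ⟨(U, V), hU, hV, hTU, hTV, hUVd⟩
  choose UV hUV1 hUV2 hUVT hUVTc hUVd using hsep
  -- countable dense family
  obtain ⟨D, hDcnt, hDcont, hDapp⟩ :=
    aux_dense (TopologicalSpace.denseSeq X) (TopologicalSpace.denseRange_denseSeq X)
  set DD : Set ↥BO := {h : ↥BO | (h : X → ℝ) ∈ D} with hDD
  have hDDcnt : DD.Countable := hDcnt.preimage Subtype.val_injective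
  have hDDne : DD.Nonempty := by
    obtain ⟨d, hdD, hdapp⟩ := hDapp (fun _ => 0) ∅ (fun _ => 1) (by simp)
    exact ⟨⟨d, continuous_mem_baireOne' (hDcont d hdD)⟩, hdD⟩
  obtain ⟨dd, hdd⟩ := hDDcnt.exists_eq_range hDDne
  -- density hitting property
  have hhit : ∀ O : Set ↥BO, IsOpen O → O.Nonempty → ∃ m, dd m ∈ O := by
    rintro O hO ⟨x, hx⟩
    obtain ⟨U, hUopen, hUeq⟩ := isOpen_induced_iff.1 hO
    have hxU : (x : X → ℝ) ∈ U := by rw [← hUeq] at hx; exact hx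
    obtain ⟨I, uu, hIuu, hpi⟩ := isOpen_pi_iff.1 hUopen _ hxU
    have hεex : ∀ y : X, ∃ εy : ℝ, 0 < εy ∧
        (y ∈ I → Metric.ball ((x : X → ℝ) y) εy ⊆ uu y) := by
      intro y
      by_cases hy : y ∈ I
      · obtain ⟨ε, hε, hb⟩ := Metric.isOpen_iff.1 (hIuu y hy).1 _ (hIuu y hy).2
        exact ⟨ε, hε, fun _ => hb⟩
      · exact ⟨1, one_pos, fun h => absurd h hy⟩
    choose εf hεf1 hεf2 using hεex
    obtain ⟨d, hdD, hdapp⟩ := hDapp (x : X → ℝ) I εf (fun y _ => hεf1 y)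
    have hdBO : d ∈ BO := continuous_mem_baireOne' (hDcont d hdD)
    have hdDD : (⟨d, hdBO⟩ : ↥BO) ∈ DD := hdD
    rw [hdd] at hdDD
    obtain ⟨m, hm⟩ := hdDD
    refine ⟨m, ?_⟩
    have hdU : d ∈ U := by
      apply hpi
      intro y hy
      have hy' : y ∈ I := hy
      apply hεf2 y hy'
      rw [Metric.mem_ball, Real.dist_eq]
      exact hdapp y hy'
    rw [← hUeq]
    show (dd m : X → ℝ) ∈ U
    rw [hm]
    exact hdU
  -- Jones' argument
  set Φ : Set (ℕ → Bool) → Set ℕ := fun T => {m | dd m ∈ (UV T).1} with hΦ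
  have hkey : ∀ T T' : Set (ℕ → Bool), ∀ z, z ∈ T → z ∉ T' → Φ T ≠ Φ T' := by
    intro T T' z hzT hzT' heq
    set x : ↥BO := ⟨czind e z, hfB z⟩ with hx
    have hx1 : x ∈ SS T := ⟨z, hzT, rfl⟩
    have hx2 : x ∈ SS T'ᶜ := ⟨z, hzT', rfl⟩
    have hW : x ∈ (UV T).1 ∩ (UV T').2 := ⟨hUVT T hx1, hUVTc T' hx2⟩
    obtain ⟨m, hm⟩ := hhit _ ((hUV1 T).inter (hUV2 T')) ⟨x, hW⟩
    have hm1 : m ∈ Φ T := hm.1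
    have hm2 : m ∉ Φ T' := fun hmem => (Set.disjoint_left.1 (hUVd T')) hmem hm.2
    rw [heq] at hm1
    exact hm2 hm1
  have hΦinj : Function.Injective Φ := by
    intro T T' heq
    by_contra hne
    have hsub : ¬ (T ⊆ T') ∨ ¬ (T' ⊆ T) := by
      by_contra h
      push_neg at h
      exact hne (Set.Subset.antisymm h.1 h.2)
    rcases hsub with h | h
    · obtain ⟨z, hz1, hz2⟩ := Set.not_subset.1 h
      exact hkey T T' z hz1 hz2 heq
    · obtain ⟨z, hz1, hz2⟩ := Set.not_subset.1 h
      exact hkey T' T z hz1 hz2 heq.symm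
  -- Cantor's diagonal
  set j : Set ℕ → (ℕ → Bool) := fun A n => if n ∈ A then true else false with hj
  have hjinj : Function.Injective j := by
    intro A A' h
    ext n
    have h' := congrFun h n
    simp only [hj] at h'
    by_cases h1 : n ∈ A <;> by_cases h2 : n ∈ A' <;> simp [h1, h2] at h' ⊢
  exact Function.cantor_injective (fun A => Φ (j '' A))
    (hΦinj.comp (Set.image_injective.2 hjinj))

end Forward


/-- For a Polish space `X`, the space `B₁(X) = B₁(X,ℝ)` of real-valued
Baire class one functions with the pointwise topology is normal iff `X` is countable;
in that case `B₁(X) = ℝ^X` and it is a separable metrizable space. -/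
theorem baireOne_normal_iff_countable {X : Type u} [TopologicalSpace X] [PolishSpace X] :
    ((T1Space ↥(BaireOne X ℝ) ∧ NormalSpace ↥(BaireOne X ℝ)) ↔ Countable X) ∧
    (Countable X → (BaireOne X ℝ = Set.univ ∧
      TopologicalSpace.SeparableSpace ↥(BaireOne X ℝ) ∧
      TopologicalSpace.MetrizableSpace ↥(BaireOne X ℝ))) := by
  constructor
  · constructor
    · rintro ⟨-, hnorm⟩
      exact aux_forward hnorm
    · intro hX
      haveI := hX
      refine ⟨inferInstance, ?_⟩
      letI : MetricSpace ↥(BaireOne X ℝ) := TopologicalSpace.metrizableSpaceMetric _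
      infer_instance
  · intro hX
    haveI := hX
    refine ⟨?_, inferInstance, inferInstance⟩
    letI := upgradeIsCompletelyMetrizable X
    exact aux_baireOne_univ
end
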